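/- arXiv:2304.03675 — 8 statements merged into one kernel-verified Lean document; each statement's English description precedes it below -/
import Mathlib

section
/- Suppose X and E are Banach spaces (dim X ≥ 2), E → E are bounded linear projections P_n onto closed subspaces E_n ⊆ E with E_m ⊆ ker P_n for all m ≠ n, and there are maps φ_n : X → E_n with lim_n R(φ_n)/(2ⁿ‖P_n‖) = ∞. Then X coarsely embeds into E. -/
open scoped ENNReal NNReal

noncomputable section

/-- Compression coefficient κ(φ) = sup_{t<∞} inf_{‖x−y‖≥t} ‖φ(x)−φ(y)‖. -/
def kappaCoef {X E : Type*} [NormedAddCommGroup X] [NormedAddCommGroup E]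
    (φ : X → E) : ℝ≥0∞ :=
  ⨆ (t : ℝ) (_ : 0 ≤ t), ⨅ (x : X) (y : X) (_ : t ≤ ‖x - y‖), (‖φ x - φ y‖₊ : ℝ≥0∞)

/-- Exact compression coefficient κ̄(φ) = sup_{t<∞} inf_{‖x−y‖=t} ‖φ(x)−φ(y)‖. -/
def kappaBarCoef {X E : Type*} [NormedAddCommGroup X] [NormedAddCommGroup E]
    (φ : X → E) : ℝ≥0∞ :=
  ⨆ (t : ℝ) (_ : 0 ≤ t), ⨅ (x : X) (y : X) (_ : ‖x - y‖ = t), (‖φ x - φ y‖₊ : ℝ≥0∞)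

/-- Expansion coefficient ω(φ) = inf_{t>0} sup_{‖x−y‖≤t} ‖φ(x)−φ(y)‖. -/
def omegaCoef {X E : Type*} [NormedAddCommGroup X] [NormedAddCommGroup E]
    (φ : X → E) : ℝ≥0∞ :=
  ⨅ (t : ℝ) (_ : 0 < t), ⨆ (x : X) (y : X) (_ : ‖x - y‖ ≤ t), (‖φ x - φ y‖₊ : ℝ≥0∞)

/-- Separation ratio R(φ) = κ(φ)/ω(φ); `ENNReal` division realizes the paper's conventions. -/
def sepRatio {X E : Type*} [NormedAddCommGroup X] [NormedAddCommGroup E]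
    (φ : X → E) : ℝ≥0∞ :=
  kappaCoef φ / omegaCoef φ

/-- Exact separation ratio R̄(φ) = κ̄(φ)/ω(φ). -/
def sepRatioBar {X E : Type*} [NormedAddCommGroup X] [NormedAddCommGroup E]
    (φ : X → E) : ℝ≥0∞ :=
  kappaBarCoef φ / omegaCoef φ

/-- Compression modulus κ_φ(t). -/
def kappaMod {X E : Type*} [NormedAddCommGroup X] [NormedAddCommGroup E]
    (φ : X → E) (t : ℝ) : ℝ≥0∞ :=
  ⨅ (x : X) (y : X) (_ : t ≤ ‖x - y‖), (‖φ x - φ y‖₊ : ℝ≥0∞)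

/-- Exact compression modulus κ̄_φ(t). -/
def kappaBarMod {X E : Type*} [NormedAddCommGroup X] [NormedAddCommGroup E]
    (φ : X → E) (t : ℝ) : ℝ≥0∞ :=
  ⨅ (x : X) (y : X) (_ : ‖x - y‖ = t), (‖φ x - φ y‖₊ : ℝ≥0∞)

/-- Exact expansion modulus ω̄_φ(t). -/
def omegaBarMod {X E : Type*} [NormedAddCommGroup X] [NormedAddCommGroup E]
    (φ : X → E) (t : ℝ) : ℝ≥0∞ :=
  ⨆ (x : X) (y : X) (_ : ‖x - y‖ = t), (‖φ x - φ y‖₊ : ℝ≥0∞)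

/-- Expansion modulus ω_φ(t). -/
def omegaMod {X E : Type*} [NormedAddCommGroup X] [NormedAddCommGroup E]
    (φ : X → E) (t : ℝ) : ℝ≥0∞ :=
  ⨆ (x : X) (y : X) (_ : ‖x - y‖ ≤ t), (‖φ x - φ y‖₊ : ℝ≥0∞)

/-- Coarse embedding: ρ₁(‖x−y‖) ≤ ‖ψ(x)−ψ(y)‖ ≤ ρ₂(‖x−y‖) with ρ₁ → ∞. -/
def CoarseEmbedding {X E : Type*} [NormedAddCommGroup X] [NormedAddCommGroup E]
    (ψ : X → E) : Prop :=
  ∃ ρ₁ ρ₂ : ℝ → ℝ, Filter.Tendsto ρ₁ Filter.atTop Filter.atTop ∧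
    ∀ x y : X, ρ₁ ‖x - y‖ ≤ ‖ψ x - ψ y‖ ∧ ‖ψ x - ψ y‖ ≤ ρ₂ ‖x - y‖

/-- Solvent map. -/
def Solvent {X E : Type*} [NormedAddCommGroup X] [NormedAddCommGroup E]
    (φ : X → E) : Prop :=
  ∃ R : ℕ → ℝ, ∀ n : ℕ, 1 ≤ n → ∀ x y : X,
    R n ≤ ‖x - y‖ → ‖x - y‖ ≤ R n + n → (n : ℝ) ≤ ‖φ x - φ y‖

/-- Lipschitz for large distances. -/
def LipschitzLarge {X E : Type*} [NormedAddCommGroup X] [NormedAddCommGroup E]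
    (φ : X → E) : Prop :=
  ∃ K : ℝ, ∀ x y : X, ‖φ x - φ y‖ ≤ K * ‖x - y‖ + K

end


section AuxCE
variable {X E : Type*} [NormedAddCommGroup X] [NormedSpace ℝ X]
  [NormedAddCommGroup E] [NormedSpace ℝ E]

set_option linter.unusedSectionVars false

lemma chain_bound_nat (φ : X → E) (W : ℝ) (hW : 0 ≤ W)
    (h : ∀ x y : X, ‖x - y‖ ≤ 1 → ‖φ x - φ y‖ ≤ W) :
    ∀ n : ℕ, ∀ x y : X, ‖x - y‖ ≤ n → ‖φ x - φ y‖ ≤ n * W := by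
  intro n
  induction n with
  | zero =>
    intro x y hxy
    have hx : x = y := by
      have h0 : ‖x - y‖ = 0 := le_antisymm (by simpa using hxy) (norm_nonneg _)
      rwa [norm_eq_zero, sub_eq_zero] at h0
    simp [hx]
  | succ n ih =>
    intro x y hxy
    by_cases hd : ‖x - y‖ ≤ n
    · calc ‖φ x - φ y‖ ≤ (n : ℝ) * W := ih x y hd
        _ ≤ ((n + 1 : ℕ) : ℝ) * W := by push_cast; nlinarith
    · push_neg at hd
      set d := ‖x - y‖ with hdd
      have hn0 : (0:ℝ) ≤ n := Nat.cast_nonneg n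
      have hd0 : 0 < d := lt_of_le_of_lt hn0 hd
      have hd1 : d ≤ n + 1 := by push_cast at hxy ⊢; linarith
      set z := x + ((d - n)/d) • (y - x) with hz
      have hxz : x - z = ((d - n)/d) • (x - y) := by rw [hz]; module
      have hzy : z - y = (n/d) • (x - y) := by
        rw [hz]
        have : (n : ℝ)/d = 1 - (d - n)/d := by field_simp; ring
        rw [this]; module
      have hnxz : ‖x - z‖ ≤ 1 := by
        rw [hxz, norm_smul, Real.norm_eq_abs,
          abs_of_nonneg (div_nonneg (by linarith) (by linarith)), ← hdd,
          div_mul_cancel₀ _ hd0.ne']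
        linarith
      have hnzy : ‖z - y‖ ≤ n := by
        rw [hzy, norm_smul, Real.norm_eq_abs,
          abs_of_nonneg (div_nonneg (by linarith) (by linarith)), ← hdd,
          div_mul_cancel₀ _ hd0.ne']
      calc ‖φ x - φ y‖ ≤ ‖φ x - φ z‖ + ‖φ z - φ y‖ := norm_sub_le_norm_sub_add_norm_sub _ _ _
        _ ≤ W + n * W := add_le_add (h x z hnxz) (ih z y hnzy)
        _ = ((n + 1 : ℕ) : ℝ) * W := by push_cast; ring

lemma chain_bound (φ : X → E) (W : ℝ) (hW : 0 ≤ W)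
    (h : ∀ x y : X, ‖x - y‖ ≤ 1 → ‖φ x - φ y‖ ≤ W) (x y : X) :
    ‖φ x - φ y‖ ≤ (‖x - y‖ + 1) * W := by
  have hd0 : (0:ℝ) ≤ ‖x - y‖ := norm_nonneg _
  have h1 : ‖x - y‖ ≤ ((⌊‖x - y‖⌋₊ + 1 : ℕ) : ℝ) := by
    push_cast; exact (Nat.lt_floor_add_one _).le
  calc ‖φ x - φ y‖ ≤ ((⌊‖x - y‖⌋₊ + 1 : ℕ) : ℝ) * W := chain_bound_nat φ W hW h _ x y h1
    _ ≤ (‖x - y‖ + 1) * W := by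
        have := Nat.floor_le hd0 (R := ℝ) (a := ‖x - y‖)
        push_cast; nlinarith


lemma omega_lt {φ : X → E} {W : ℝ} (hW : 0 ≤ W) (h : omegaCoef φ < ENNReal.ofReal W) :
    ∃ t₀ : ℝ, 0 < t₀ ∧ ∀ x y : X, ‖x - y‖ ≤ t₀ → ‖φ x - φ y‖ ≤ W := by
  rw [omegaCoef, iInf_lt_iff] at h
  obtain ⟨t₀, h⟩ := h
  rw [iInf_lt_iff] at h
  obtain ⟨ht₀, h⟩ := h
  refine ⟨t₀, ht₀, fun x y hxy => ?_⟩
  have h1 : (‖φ x - φ y‖₊ : ℝ≥0∞) ≤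
      ⨆ (x' : X) (y' : X) (_ : ‖x' - y'‖ ≤ t₀), (‖φ x' - φ y'‖₊ : ℝ≥0∞) :=
    le_iSup_of_le x (le_iSup_of_le y (le_iSup_of_le hxy le_rfl))
  have h2 : ENNReal.ofReal ‖φ x - φ y‖ ≤ ENNReal.ofReal W := by
    rw [ofReal_norm, enorm_eq_nnnorm]; exact h1.trans h.le
  exact (ENNReal.ofReal_le_ofReal_iff hW).1 h2

lemma kappa_lt {φ : X → E} {m : ℝ} (h : ENNReal.ofReal m < kappaCoef φ) :
    ∃ T : ℝ, ∀ x y : X, T ≤ ‖x - y‖ → m ≤ ‖φ x - φ y‖ := by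
  rw [kappaCoef, lt_iSup_iff] at h
  obtain ⟨T, h⟩ := h
  rw [lt_iSup_iff] at h
  obtain ⟨hT, h⟩ := h
  refine ⟨T, fun x y hxy => ?_⟩
  have h1 : (⨅ (x' : X) (y' : X) (_ : T ≤ ‖x' - y'‖), (‖φ x' - φ y'‖₊ : ℝ≥0∞)) ≤
      (‖φ x - φ y‖₊ : ℝ≥0∞) :=
    iInf_le_of_le x (iInf_le_of_le y (iInf_le_of_le hxy le_rfl))
  have h2 : ENNReal.ofReal m ≤ ENNReal.ofReal ‖φ x - φ y‖ := by
    rw [ofReal_norm, enorm_eq_nnnorm]; exact h.le.trans h1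
  exact (ENNReal.ofReal_le_ofReal_iff (norm_nonneg _)).1 h2

lemma sep_extract {φ : X → E} {C : ℝ} (hC : 0 < C)
    (h : ENNReal.ofReal (4 * C) ≤ sepRatio φ) :
    ∃ W t₀ T : ℝ, 0 < W ∧ 0 < t₀ ∧
      (∀ x y : X, ‖x - y‖ ≤ t₀ → ‖φ x - φ y‖ ≤ W) ∧
      (∀ x y : X, T ≤ ‖x - y‖ → C * W ≤ ‖φ x - φ y‖) := by
  have h4C : (0:ℝ≥0∞) < ENNReal.ofReal (4 * C) := ENNReal.ofReal_pos.2 (by linarith)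
  have hratio : (0:ℝ≥0∞) < sepRatio φ := lt_of_lt_of_le h4C h
  have hκ : kappaCoef φ ≠ 0 := by
    intro h0
    rw [sepRatio, h0, ENNReal.zero_div] at hratio
    exact lt_irrefl _ hratio
  have hω : omegaCoef φ ≠ ⊤ := by
    intro h0
    rw [sepRatio, h0, ENNReal.div_top] at hratio
    exact lt_irrefl _ hratio
  by_cases hω0 : omegaCoef φ = 0
  · -- pick m with ofReal m < κ
    obtain ⟨c, hc0, hcκ⟩ := exists_between (pos_iff_ne_zero.2 hκ : (0:ℝ≥0∞) < kappaCoef φ)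
    have hct : c ≠ ⊤ := hcκ.ne_top
    set m := c.toReal with hm
    have hm0 : 0 < m := ENNReal.toReal_pos hc0.ne' hct
    set W := m / (2 * C) with hW
    have hW0 : 0 < W := by positivity
    have hCW : C * W = m / 2 := by rw [hW]; field_simp
    have hκW : ENNReal.ofReal (C * W) < kappaCoef φ := by
      rw [hCW]
      calc ENNReal.ofReal (m / 2) ≤ ENNReal.ofReal m :=
            ENNReal.ofReal_le_ofReal (by linarith)
        _ = c := by rw [hm, ENNReal.ofReal_toReal hct]
        _ < kappaCoef φ := hcκ
    obtain ⟨T, hT⟩ := kappa_lt hκW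
    have hωW : omegaCoef φ < ENNReal.ofReal W := by
      rw [hω0]; exact ENNReal.ofReal_pos.2 hW0
    obtain ⟨t₀, ht₀, hup⟩ := omega_lt hW0.le hωW
    exact ⟨W, t₀, T, hW0, ht₀, hup, hT⟩
  · set w := (omegaCoef φ).toReal with hw
    have hw0 : 0 < w := ENNReal.toReal_pos hω0 hω
    have hωw : omegaCoef φ = ENNReal.ofReal w := (ENNReal.ofReal_toReal hω).symm
    set W := 2 * w with hWdef
    have hW0 : 0 < W := by positivity
    have hmul : ENNReal.ofReal (4 * C) * omegaCoef φ ≤ kappaCoef φ := by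
      rw [← ENNReal.le_div_iff_mul_le (Or.inl hω0) (Or.inl hω)]
      exact h
    have hκW : ENNReal.ofReal (C * W) < kappaCoef φ := by
      calc ENNReal.ofReal (C * W) < ENNReal.ofReal (4 * C * w) := by
            rw [ENNReal.ofReal_lt_ofReal_iff (by positivity)]
            rw [hWdef]; nlinarith
        _ = ENNReal.ofReal (4 * C) * ENNReal.ofReal w := by
            rw [← ENNReal.ofReal_mul (by positivity)]
        _ = ENNReal.ofReal (4 * C) * omegaCoef φ := by rw [← hωw]
        _ ≤ kappaCoef φ := hmul
    obtain ⟨T, hT⟩ := kappa_lt hκW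
    have hωW : omegaCoef φ < ENNReal.ofReal W := by
      rw [hωw, ENNReal.ofReal_lt_ofReal_iff (by positivity)]
      linarith
    obtain ⟨t₀, ht₀, hup⟩ := omega_lt hW0.le hωW
    exact ⟨W, t₀, T, hW0, ht₀, hup, hT⟩


lemma kappa_zero_of_zero [Nontrivial X] (φ : X → E) (hφ : ∀ x, φ x = 0) :
    kappaCoef φ = 0 := by
  obtain ⟨v, hv⟩ := exists_ne (0 : X)
  have hv0 : 0 < ‖v‖ := norm_pos_iff.2 hv
  refine le_antisymm ?_ zero_le
  rw [kappaCoef]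
  refine iSup₂_le fun t ht => ?_
  have hx : t ≤ ‖(t / ‖v‖) • v - 0‖ := by
    rw [sub_zero, norm_smul, Real.norm_eq_abs, abs_of_nonneg (by positivity),
      div_mul_cancel₀ _ hv0.ne']
  refine le_trans (iInf_le_of_le ((t / ‖v‖) • v) (iInf_le_of_le 0 (iInf_le_of_le hx le_rfl))) ?_
  simp [hφ]



lemma scale_lemma (φ : X → E) (S : Submodule ℝ E) (hφS : ∀ x, φ x ∈ S)
    (M ε : ℝ) (hM : 0 < M) (hε : 0 < ε)
    (h : ENNReal.ofReal (8 * M / ε) ≤ sepRatio φ) :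
    ∃ θ : X → E, (∀ x, θ x ∈ S) ∧ θ 0 = 0 ∧
      (∀ x y : X, ‖θ x - θ y‖ ≤ ε * (‖x - y‖ + 1)) ∧
      ∃ R : ℝ, ∀ x y : X, R ≤ ‖x - y‖ → M ≤ ‖θ x - θ y‖ := by
  set C := 2 * M / ε with hCdef
  have hC : 0 < C := by positivity
  have h4 : (8 : ℝ) * M / ε = 4 * C := by rw [hCdef]; ring
  rw [h4] at h
  obtain ⟨W, t₀, T, hW0, ht₀, hup, hlow⟩ := sep_extract hC h
  set χ : X → E := fun x => φ (t₀ • x) with hχ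
  have hχup : ∀ x y : X, ‖x - y‖ ≤ 1 → ‖χ x - χ y‖ ≤ W := by
    intro x y hxy
    apply hup
    rw [← smul_sub, norm_smul, Real.norm_eq_abs, abs_of_pos ht₀]
    nlinarith
  set θ : X → E := fun x => (ε / W) • (χ x - χ 0) with hθ
  have hdiff : ∀ x y : X, θ x - θ y = (ε / W) • (χ x - χ y) := by
    intro x y
    rw [hθ]; simp only [← smul_sub]; congr 1; abel
  refine ⟨θ, ?_, by simp [hθ], ?_, ?_⟩
  · intro x
    exact Submodule.smul_mem _ _ (Submodule.sub_mem _ (hφS _) (hφS _))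
  · intro x y
    rw [hdiff, norm_smul, Real.norm_eq_abs, abs_of_pos (by positivity)]
    calc ε / W * ‖χ x - χ y‖ ≤ ε / W * ((‖x - y‖ + 1) * W) := by
          have := chain_bound χ W hW0.le hχup x y
          have h0 : 0 < ε / W := by positivity
          nlinarith
      _ = ε * (‖x - y‖ + 1) := by field_simp
  · refine ⟨(|T| + t₀) / t₀, fun x y hxy => ?_⟩
    have hTle : T ≤ ‖t₀ • x - t₀ • y‖ := by
      rw [← smul_sub, norm_smul, Real.norm_eq_abs, abs_of_pos ht₀]
      have h1 : |T| + t₀ ≤ t₀ * ‖x - y‖ := by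
        rw [div_le_iff₀ ht₀] at hxy; nlinarith [le_abs_self T]
      nlinarith [le_abs_self T]
    have hCW := hlow _ _ hTle
    rw [hdiff, norm_smul, Real.norm_eq_abs, abs_of_pos (by positivity)]
    have hεW : 0 < ε / W := by positivity
    have : ε / W * (C * W) = 2 * M := by rw [hCdef]; field_simp
    nlinarith


end AuxCE

theorem coarse_embedding_from_projections {X E : Type*}
    [NormedAddCommGroup X] [NormedSpace ℝ X] [CompleteSpace X]
    [NormedAddCommGroup E] [NormedSpace ℝ E] [CompleteSpace E]
    (hX : 2 ≤ Module.rank ℝ X)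
    (P : ℕ → E →L[ℝ] E) (En : ℕ → Submodule ℝ E)
    (hidem : ∀ n, ∀ v : E, P n (P n v) = P n v)
    (hrange : ∀ n, LinearMap.range (P n : E →ₗ[ℝ] E) = En n)
    (hker : ∀ m n, m ≠ n → En m ≤ LinearMap.ker (P n : E →ₗ[ℝ] E))
    (φ : ℕ → X → E) (hφmem : ∀ n x, φ n x ∈ En n)
    (hlim : Filter.Tendsto
      (fun n => sepRatio (φ n) / ((2 : ℝ≥0∞) ^ n * ENNReal.ofReal ‖P n‖))
      Filter.atTop (nhds ⊤)) :
    ∃ ψ : X → E, CoarseEmbedding ψ := by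
  classical
  have hnt : Nontrivial X :=
    rank_pos_iff_nontrivial.1 (lt_of_lt_of_le (by norm_num) hX)
  -- P n is the identity on En n
  have hPid : ∀ n, ∀ w ∈ En n, P n w = w := by
    intro n w hw
    rw [← hrange n] at hw
    obtain ⟨u, hu⟩ := hw
    rw [← hu]; exact hidem n u
  -- eventual lower bounds on sepRatio
  have hev : ∀ k : ℕ, ∀ᶠ m in Filter.atTop,
      ENNReal.ofReal (8 * (((k : ℝ) + 1) * ‖P m‖) / ((1/2 : ℝ)^k)) ≤ sepRatio (φ m)
        ∧ 0 < ‖P m‖ := by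
    intro k
    set c : ℝ := 8 * ((k : ℝ) + 1) * 2 ^ k with hc
    have hc0 : 0 < c := by positivity
    have hev0 := (ENNReal.tendsto_nhds_top_iff_nnreal.1 hlim) c.toNNReal
    filter_upwards [hev0] with m hm
    have hcoe : ((c.toNNReal : ℝ≥0∞)) = ENNReal.ofReal c := rfl
    rw [hcoe] at hm
    have hPpos : 0 < ‖P m‖ := by
      rcases lt_or_eq_of_le (norm_nonneg (P m)) with h | h
      · exact h
      · exfalso
        have hP0 : P m = 0 := by rwa [eq_comm, norm_eq_zero] at h
        have hφ0 : ∀ x, φ m x = 0 := by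
          intro x
          have hx := hφmem m x
          rw [← hrange m] at hx
          obtain ⟨u, hu⟩ := hx
          rw [← hu, hP0]; rfl
        have hκ : sepRatio (φ m) = 0 := by
          rw [sepRatio, kappa_zero_of_zero (φ m) hφ0, ENNReal.zero_div]
        rw [hκ, ENNReal.zero_div] at hm
        exact (not_lt_of_ge zero_le) hm
    refine ⟨?_, hPpos⟩
    set D : ℝ≥0∞ := (2 : ℝ≥0∞) ^ m * ENNReal.ofReal ‖P m‖ with hD
    have hD0 : D ≠ 0 := by
      rw [hD]
      exact mul_ne_zero (pow_ne_zero _ (by norm_num)) (ENNReal.ofReal_pos.2 hPpos).ne'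
    have hDt : D ≠ ⊤ := by
      rw [hD]
      exact ENNReal.mul_ne_top (ENNReal.pow_ne_top (by norm_num)) ENNReal.ofReal_ne_top
    have hmul : ENNReal.ofReal c * D ≤ sepRatio (φ m) := by
      rw [← ENNReal.le_div_iff_mul_le (Or.inl hD0) (Or.inl hDt)]
      exact hm.le
    have heq : 8 * (((k : ℝ) + 1) * ‖P m‖) / ((1/2 : ℝ)^k) = c * ‖P m‖ := by
      rw [hc]
      have h2 : ((1:ℝ)/2)^k = 1 / 2^k := by rw [div_pow, one_pow]
      rw [h2]
      field_simp
    rw [heq]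
    calc ENNReal.ofReal (c * ‖P m‖) = ENNReal.ofReal c * ENNReal.ofReal ‖P m‖ :=
          ENNReal.ofReal_mul hc0.le
      _ ≤ ENNReal.ofReal c * D := by
          rw [hD]
          refine mul_le_mul_right ?_ _
          refine le_mul_of_one_le_left zero_le ?_
          exact one_le_pow_of_one_le' (by norm_num : (1:ℝ≥0∞) ≤ 2) m
      _ ≤ sepRatio (φ m) := hmul
  -- extract subsequence
  obtain ⟨n, hmono, hn⟩ := Filter.extraction_forall_of_eventually hev
  -- construct the building blocks
  have hex : ∀ k : ℕ, ∃ θ : X → E, (∀ x, θ x ∈ En (n k)) ∧ θ 0 = 0 ∧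
      (∀ x y : X, ‖θ x - θ y‖ ≤ (1/2 : ℝ)^k * (‖x - y‖ + 1)) ∧
      ∃ R : ℝ, ∀ x y : X, R ≤ ‖x - y‖ → ((k : ℝ) + 1) * ‖P (n k)‖ ≤ ‖θ x - θ y‖ := by
    intro k
    have hP := (hn k).2
    exact scale_lemma (φ (n k)) (En (n k)) (hφmem (n k)) _ _
      (by positivity) (by positivity) (hn k).1
  choose θ hmem h0 hU hL using hex
  choose R hR using hL
  -- summability
  have hbound : ∀ (k : ℕ) (x : X), ‖θ k x‖ ≤ (1/2 : ℝ)^k * (‖x‖ + 1) := by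
    intro k x
    have := hU k x 0
    rw [h0 k, sub_zero, sub_zero] at this
    exact this
  have hsum : ∀ x : X, Summable fun k => θ k x := by
    intro x
    exact Summable.of_norm_bounded (summable_geometric_two.mul_right (‖x‖ + 1))
      (fun k => hbound k x)
  set ψ : X → E := fun x => ∑' k, θ k x with hψ
  have hψdiff : ∀ x y : X, ψ x - ψ y = ∑' k, (θ k x - θ k y) := by
    intro x y
    rw [hψ]
    exact (Summable.tsum_sub (hsum x) (hsum y)).symm
  -- upper bound
  have hupper : ∀ x y : X, ‖ψ x - ψ y‖ ≤ 2 * (‖x - y‖ + 1) := by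
    intro x y
    rw [hψdiff]
    have hs : Summable fun k => (1/2 : ℝ)^k * (‖x - y‖ + 1) :=
      summable_geometric_two.mul_right _
    have hns : Summable fun k => ‖θ k x - θ k y‖ :=
      Summable.of_nonneg_of_le (fun k => norm_nonneg _) (fun k => hU k x y) hs
    calc ‖∑' k, (θ k x - θ k y)‖ ≤ ∑' k, ‖θ k x - θ k y‖ := norm_tsum_le_tsum_norm hns
      _ ≤ ∑' k, (1/2 : ℝ)^k * (‖x - y‖ + 1) := Summable.tsum_le_tsum (fun k => hU k x y) hns hs
      _ = 2 * (‖x - y‖ + 1) := by rw [tsum_mul_right, tsum_geometric_two]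
  -- projections pick out summands
  have hproj : ∀ (j : ℕ) (x y : X), P (n j) (ψ x - ψ y) = θ j x - θ j y := by
    intro j x y
    rw [hψdiff]
    rw [ContinuousLinearMap.map_tsum _ ((hsum x).sub (hsum y))]
    have hj : P (n j) (θ j x - θ j y) = θ j x - θ j y :=
      hPid _ _ (Submodule.sub_mem _ (hmem j x) (hmem j y))
    rw [← hj]
    refine tsum_eq_single j ?_
    intro k hk
    have hmemk : θ k x - θ k y ∈ En (n k) :=
      Submodule.sub_mem _ (hmem k x) (hmem k y)
    have hker' := hker (n k) (n j) (fun hkk => hk (hmono.injective hkk)) hmemk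
    exact LinearMap.mem_ker.1 hker'
  -- lower bound
  have hlower : ∀ (j : ℕ) (x y : X), R j ≤ ‖x - y‖ → ((j : ℝ) + 1) ≤ ‖ψ x - ψ y‖ := by
    intro j x y hxy
    have hP : 0 < ‖P (n j)‖ := (hn j).2
    have h1 : ((j : ℝ) + 1) * ‖P (n j)‖ ≤ ‖θ j x - θ j y‖ := hR j x y hxy
    have h2 : θ j x - θ j y = P (n j) (ψ x - ψ y) := (hproj j x y).symm
    have h3 : ‖P (n j) (ψ x - ψ y)‖ ≤ ‖P (n j)‖ * ‖ψ x - ψ y‖ :=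
      (P (n j)).le_opNorm _
    rw [h2] at h1
    have h4 : ‖P (n j)‖ * ((j : ℝ) + 1) ≤ ‖P (n j)‖ * ‖ψ x - ψ y‖ := by linarith
    exact le_of_mul_le_mul_left h4 hP
  -- the embedding
  refine ⟨ψ, ?_⟩
  set S : ℕ → ℝ := fun j => max (R j) j with hS
  set ρ₁ : ℝ → ℝ := fun t => (Nat.findGreatest (fun k => k = 0 ∨ S k ≤ t) ⌊t⌋₊ : ℝ) with hρ₁
  refine ⟨ρ₁, fun t => 2 * (t + 1), ?_, ?_⟩
  · rw [Filter.tendsto_atTop]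
    intro b
    set k : ℕ := ⌈max b 0⌉₊ with hk
    filter_upwards [Filter.eventually_ge_atTop (max (S k) (k : ℝ))] with t ht
    have htk : (k : ℝ) ≤ t := le_trans (le_max_right _ _) ht
    have htS : S k ≤ t := le_trans (le_max_left _ _) ht
    have hfloor : k ≤ ⌊t⌋₊ := Nat.le_floor htk
    have hfind : k ≤ Nat.findGreatest (fun k => k = 0 ∨ S k ≤ t) ⌊t⌋₊ :=
      Nat.le_findGreatest hfloor (Or.inr htS)
    have : (k : ℝ) ≤ ρ₁ t := by simp only [hρ₁]; exact_mod_cast hfind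
    calc b ≤ max b 0 := le_max_left _ _
      _ ≤ (k : ℝ) := Nat.le_ceil _
      _ ≤ ρ₁ t := this
  · intro x y
    refine ⟨?_, hupper x y⟩
    set d := ‖x - y‖ with hd
    set m : ℕ := Nat.findGreatest (fun k => k = 0 ∨ S k ≤ d) ⌊d⌋₊ with hm
    rcases Nat.eq_zero_or_pos m with hm0 | hmpos
    · have : ρ₁ d = 0 := by rw [hρ₁]; simp only [← hm, hm0]; norm_num
      rw [this]
      exact norm_nonneg _
    · have hspec := Nat.findGreatest_spec (P := fun k => k = 0 ∨ S k ≤ d)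
        (Nat.zero_le ⌊d⌋₊) (Or.inl rfl)
      rw [← hm] at hspec
      rcases hspec with h0' | hSd
      · omega
      · have hRm : R m ≤ d := le_trans (le_max_left _ _) hSd
        have := hlower m x y hRm
        have hρ : ρ₁ d = (m : ℝ) := rfl
        rw [hρ]
        linarith
end

section
/- Suppose X and E are Banach spaces (dim X ≥ 2) such that E ⊕ E embeds isomorphically into E. Then X coarsely embeds into E if and only if sup_φ R(φ) = ∞, where the supremum is over all maps φ : X → E. -/
open scoped ENNReal NNReal

/-- chaining -/
theorem chainLem {X E : Type*} [NormedAddCommGroup X] [NormedSpace ℝ X] [NormedAddCommGroup E]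
    (θ : X → E) (ε : ℝ) (hε : 0 ≤ ε)
    (h : ∀ x y : X, ‖x - y‖ ≤ 1 → ‖θ x - θ y‖ ≤ ε) (x y : X) :
    ‖θ x - θ y‖ ≤ ε * (‖x - y‖ + 1) := by
  set d := ‖x - y‖ with hd
  have hd0 : 0 ≤ d := norm_nonneg _
  set m := ⌈d⌉₊ with hm
  rcases Nat.eq_zero_or_pos m with h0 | hpos
  · have : d ≤ 1 := by
      have := Nat.ceil_eq_zero.1 h0
      linarith
    calc ‖θ x - θ y‖ ≤ ε := h x y this
      _ ≤ ε * (d + 1) := by nlinarith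
  · set z : ℕ → X := fun i => x + ((i : ℝ) / m) • (y - x) with hz
    have hm0 : (0:ℝ) < m := by exact_mod_cast hpos
    have hz0 : z 0 = x := by simp [hz]
    have hzm : z m = y := by
      simp only [hz, div_self hm0.ne']
      simp
    have hstep : ∀ i : ℕ, ‖z i - z (i+1)‖ ≤ 1 := by
      intro i
      have : z i - z (i+1) = (((i:ℝ) - (i+1)) / m) • (y - x) := by
        simp only [hz]
        rw [sub_div]
        module
      rw [this, norm_smul, Real.norm_eq_abs]
      have hdm : d ≤ (m:ℝ) := Nat.le_ceil d
      have habs : |((i:ℝ) - (i+1)) / m| = 1 / m := by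
        rw [abs_div]
        norm_num [abs_of_pos hm0]
      rw [habs, norm_sub_rev, ← hd]
      rw [div_mul_eq_mul_div, one_mul, div_le_one hm0]
      exact hdm
    have htel : θ x - θ y = ∑ i ∈ Finset.range m, (θ (z i) - θ (z (i+1))) := by
      rw [Finset.sum_range_sub' (fun i => θ (z i)) m, hz0, hzm]
    have : ‖θ x - θ y‖ ≤ (m : ℝ) * ε := by
      rw [htel]
      calc ‖∑ i ∈ Finset.range m, (θ (z i) - θ (z (i+1)))‖
          ≤ ∑ i ∈ Finset.range m, ‖θ (z i) - θ (z (i+1))‖ := norm_sum_le _ _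
        _ ≤ ∑ _i ∈ Finset.range m, ε := by
            apply Finset.sum_le_sum
            intro i _
            exact h _ _ (hstep i)
        _ = (m:ℝ) * ε := by simp [mul_comm]
    have hmd : (m:ℝ) ≤ d + 1 := le_of_lt (Nat.ceil_lt_add_one hd0)
    calc ‖θ x - θ y‖ ≤ (m:ℝ) * ε := this
      _ ≤ (d + 1) * ε := by nlinarith
      _ = ε * (d + 1) := mul_comm _ _

theorem iterBounds {E : Type*} [NormedAddCommGroup E] [NormedSpace ℝ E]
    (J : (E × E) →L[ℝ] E) (c : ℝ) (hc : 0 < c) (hJc : ∀ v : E × E, c * ‖v‖ ≤ ‖J v‖) :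
    ∃ e : ℕ → E →L[ℝ] E,
      (∀ (k : ℕ) (v : E), ‖e k v‖ ≤ (‖J‖ + 1) ^ (k + 1) * ‖v‖) ∧
      (∀ (N : ℕ) (d : ℕ → E) (k : ℕ), k < N →
        c ^ (k + 1) * ‖d k‖ ≤ ‖∑ j ∈ Finset.range N, e j (d j)‖) := by
  set f : E →L[ℝ] E := J.comp (ContinuousLinearMap.inr ℝ E E) with hf
  set e : ℕ → E →L[ℝ] E := fun k => Nat.rec (J.comp (ContinuousLinearMap.inl ℝ E E)) (fun _ g => f.comp g) k with he
  have he0 : ∀ v, e 0 v = J (v, 0) := fun v => rfl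
  have heS : ∀ k v, e (k+1) v = J (0, e k v) := fun k v => rfl
  have hL1 : (1:ℝ) ≤ ‖J‖ + 1 := by linarith [norm_nonneg J]
  refine ⟨e, ?_, ?_⟩
  · intro k
    induction k with
    | zero =>
      intro v
      rw [he0]
      calc ‖J (v, 0)‖ ≤ ‖J‖ * ‖((v, 0) : E × E)‖ := J.le_opNorm _
        _ = ‖J‖ * ‖v‖ := by rw [Prod.norm_def]; simp
        _ ≤ (‖J‖ + 1) ^ 1 * ‖v‖ := by nlinarith [norm_nonneg v]
    | succ k ih =>
      intro v
      rw [heS]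
      calc ‖J (0, e k v)‖ ≤ ‖J‖ * ‖((0, e k v) : E × E)‖ := J.le_opNorm _
        _ = ‖J‖ * ‖e k v‖ := by rw [Prod.norm_def]; simp
        _ ≤ (‖J‖ + 1) * ((‖J‖ + 1) ^ (k+1) * ‖v‖) := by
            have h1 := ih v
            have h2 : 0 ≤ ‖J‖ := norm_nonneg _
            nlinarith [norm_nonneg (e k v), norm_nonneg v]
        _ = (‖J‖ + 1) ^ (k + 1 + 1) * ‖v‖ := by ring
  · -- lower bound
    have key : ∀ (N : ℕ) (d : ℕ → E),
        ∑ j ∈ Finset.range (N + 1), e j (d j)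
          = J (d 0, ∑ j ∈ Finset.range N, e j (d (j+1))) := by
      intro N d
      rw [Finset.sum_range_succ' (fun j => e j (d j)) N]
      have : ∀ j, e (j+1) (d (j+1)) = J (0, e j (d (j+1))) := fun j => heS _ _
      simp_rw [this, he0]
      rw [← map_sum J (fun j => ((0, e j (d (j+1))) : E × E)) (Finset.range N), ← map_add]
      congr 1
      rw [Prod.ext_iff]
      constructor
      · simp [Prod.fst_sum]
      · simp [Prod.snd_sum]
    intro N d k
    induction k generalizing N d with
    | zero =>
      intro hk
      obtain ⟨N', rfl⟩ : ∃ N', N = N' + 1 := ⟨N - 1, by omega⟩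
      rw [key]
      calc c ^ 1 * ‖d 0‖ = c * ‖d 0‖ := by ring
        _ ≤ c * ‖((d 0, ∑ j ∈ Finset.range N', e j (d (j+1))) : E × E)‖ := by
            have := norm_fst_le ((d 0, ∑ j ∈ Finset.range N', e j (d (j+1))) : E × E)
            nlinarith
        _ ≤ ‖J (d 0, ∑ j ∈ Finset.range N', e j (d (j+1)))‖ := hJc _
    | succ k ih =>
      intro hk
      obtain ⟨N', rfl⟩ : ∃ N', N = N' + 1 := ⟨N - 1, by omega⟩
      rw [key]
      have hk' : k < N' := by omega
      have ih' := ih N' (fun j => d (j+1)) hk'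
      calc c ^ (k+1+1) * ‖d (k+1)‖ = c * (c ^ (k+1) * ‖d (k+1)‖) := by ring
        _ ≤ c * ‖∑ j ∈ Finset.range N', e j (d (j+1))‖ := by
            have h2 : (0:ℝ) < c := hc
            nlinarith
        _ ≤ c * ‖((d 0, ∑ j ∈ Finset.range N', e j (d (j+1))) : E × E)‖ := by
            have := norm_snd_le ((d 0, ∑ j ∈ Finset.range N', e j (d (j+1))) : E × E)
            nlinarith
        _ ≤ ‖J (d 0, ∑ j ∈ Finset.range N', e j (d (j+1)))‖ := hJc _

theorem mkTheta {X E : Type*} [NormedAddCommGroup X] [NormedSpace ℝ X]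
    [NormedAddCommGroup E] [NormedSpace ℝ E]
    (φ : X → E) (ε K B t t₁ : ℝ) (hB : 0 < B) (ht : 0 < t)
    (h1 : ∀ x y : X, ‖x - y‖ ≤ t → ‖φ x - φ y‖ ≤ ε * B)
    (h2 : ∀ x y : X, t₁ ≤ ‖x - y‖ → K * B ≤ ‖φ x - φ y‖) :
    ∃ (θ : X → E) (s : ℝ),
      (∀ x y : X, ‖x - y‖ ≤ 1 → ‖θ x - θ y‖ ≤ ε) ∧
      (∀ x y : X, s ≤ ‖x - y‖ → K ≤ ‖θ x - θ y‖) := by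
  refine ⟨fun x => B⁻¹ • φ (t • x), t₁ / t, ?_, ?_⟩
  · intro x y hxy
    have hst : ‖t • x - t • y‖ ≤ t := by
      rw [← smul_sub, norm_smul, Real.norm_eq_abs, abs_of_pos ht]
      nlinarith [norm_nonneg (x - y)]
    have h := h1 _ _ hst
    have : (fun x => B⁻¹ • φ (t • x)) x - (fun x => B⁻¹ • φ (t • x)) y
        = B⁻¹ • (φ (t • x) - φ (t • y)) := by simp [smul_sub]
    rw [this, norm_smul, Real.norm_eq_abs, abs_of_pos (inv_pos.2 hB)]
    rw [inv_mul_le_iff₀ hB]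
    calc ‖φ (t • x) - φ (t • y)‖ ≤ ε * B := h
      _ = B * ε := mul_comm _ _
  · intro x y hxy
    have hst : t₁ ≤ ‖t • x - t • y‖ := by
      rw [← smul_sub, norm_smul, Real.norm_eq_abs, abs_of_pos ht]
      rw [div_le_iff₀ ht] at hxy
      nlinarith
    have h := h2 _ _ hst
    have heq : (fun x => B⁻¹ • φ (t • x)) x - (fun x => B⁻¹ • φ (t • x)) y
        = B⁻¹ • (φ (t • x) - φ (t • y)) := by simp [smul_sub]
    rw [heq, norm_smul, Real.norm_eq_abs, abs_of_pos (inv_pos.2 hB)]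
    rw [le_inv_mul_iff₀ hB]
    calc B * K = K * B := mul_comm _ _
      _ ≤ ‖φ (t • x) - φ (t • y)‖ := h

theorem existsTheta {X E : Type*} [NormedAddCommGroup X] [NormedSpace ℝ X]
    [NormedAddCommGroup E] [NormedSpace ℝ E]
    (h : ∀ M : ℝ≥0∞, M < ⊤ → ∃ φ : X → E, M < sepRatio φ)
    (ε K : ℝ) (hε : 0 < ε) (hK : 0 < K) :
    ∃ (θ : X → E) (s : ℝ),
      (∀ x y : X, ‖x - y‖ ≤ 1 → ‖θ x - θ y‖ ≤ ε) ∧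
      (∀ x y : X, s ≤ ‖x - y‖ → K ≤ ‖θ x - θ y‖) := by
  obtain ⟨φ, hφ⟩ := h (ENNReal.ofReal (2 * K / ε)) ENNReal.ofReal_lt_top
  rw [sepRatio] at hφ
  have hωtop : omegaCoef φ ≠ ⊤ := by
    intro h'
    rw [h', ENNReal.div_top] at hφ
    exact absurd hφ (not_lt.2 zero_le)
  by_cases hω0 : omegaCoef φ = 0
  · -- ω = 0 case
    have hκ0 : kappaCoef φ ≠ 0 := by
      intro h'
      rw [h', hω0, ENNReal.zero_div] at hφ
      exact absurd hφ (not_lt.2 zero_le)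
    have hκpos : (0 : ℝ≥0∞) < kappaCoef φ := pos_iff_ne_zero.2 hκ0
    rw [kappaCoef, lt_iSup_iff] at hκpos
    obtain ⟨t₁, ht₁⟩ := hκpos
    rw [lt_iSup_iff] at ht₁
    obtain ⟨ht₁0, hA⟩ := ht₁
    set A : ℝ≥0∞ := ⨅ (x : X) (y : X) (_ : t₁ ≤ ‖x - y‖), (‖φ x - φ y‖₊ : ℝ≥0∞) with hAdef
    set δE : ℝ≥0∞ := min 1 A with hδEdef
    have hδE0 : 0 < δE := lt_min one_pos hA
    have hδEtop : δE ≠ ⊤ := ne_top_of_le_ne_top (by simp) (min_le_left 1 A)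
    set δ : ℝ := δE.toReal with hδdef
    have hδ0 : 0 < δ := ENNReal.toReal_pos (ne_of_gt hδE0) hδEtop
    have hsep : ∀ x y : X, t₁ ≤ ‖x - y‖ → δ ≤ ‖φ x - φ y‖ := by
      intro x y hxy
      have h1 : δE ≤ (‖φ x - φ y‖₊ : ℝ≥0∞) :=
        le_trans (min_le_right _ _)
          (iInf_le_of_le x (iInf_le_of_le y (iInf_le _ hxy)))
      rw [← ENNReal.ofReal_toReal hδEtop, ← hδdef, ← enorm_eq_nnnorm, ← ofReal_norm] at h1
      exact (ENNReal.ofReal_le_ofReal_iff (norm_nonneg _)).1 h1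
    -- upper bound from ω = 0
    have hωlt : omegaCoef φ < ENNReal.ofReal (ε * (δ / K)) := by
      rw [hω0]
      exact ENNReal.ofReal_pos.2 (by positivity)
    rw [omegaCoef, iInf_lt_iff] at hωlt
    obtain ⟨t₀, hωlt⟩ := hωlt
    rw [iInf_lt_iff] at hωlt
    obtain ⟨ht₀, hS⟩ := hωlt
    have hupper : ∀ x y : X, ‖x - y‖ ≤ t₀ → ‖φ x - φ y‖ ≤ ε * (δ / K) := by
      intro x y hxy
      have hle : (‖φ x - φ y‖₊ : ℝ≥0∞)
          ≤ ⨆ (x : X) (y : X) (_ : ‖x - y‖ ≤ t₀), (‖φ x - φ y‖₊ : ℝ≥0∞) := by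
        apply le_iSup_of_le x
        apply le_iSup_of_le y
        apply le_iSup_of_le hxy
        exact le_rfl
      have h1 : (‖φ x - φ y‖₊ : ℝ≥0∞) < ENNReal.ofReal (ε * (δ / K)) :=
        lt_of_le_of_lt hle hS
      rw [← enorm_eq_nnnorm, ← ofReal_norm] at h1
      have := le_of_lt ((ENNReal.ofReal_lt_ofReal_iff_of_nonneg (norm_nonneg _)).1 h1)
      exact this
    refine mkTheta φ ε K (δ / K) t₀ t₁ (by positivity) ht₀ hupper ?_
    intro x y hxy
    have : K * (δ / K) = δ := by field_simp
    rw [this]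
    exact hsep x y hxy
  · -- 0 < ω < ⊤ case
    have hMκ : ENNReal.ofReal (2 * K / ε) * omegaCoef φ < kappaCoef φ :=
      (ENNReal.lt_div_iff_mul_lt (Or.inl hω0) (Or.inl hωtop)).1 hφ
    rw [kappaCoef, lt_iSup_iff] at hMκ
    obtain ⟨t₁, hMκ⟩ := hMκ
    rw [lt_iSup_iff] at hMκ
    obtain ⟨ht₁0, hA⟩ := hMκ
    have h2ω : omegaCoef φ < 2 * omegaCoef φ := by
      conv_lhs => rw [← one_mul (omegaCoef φ)]
      exact ENNReal.mul_lt_mul_left hω0 hωtop ENNReal.one_lt_two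
    rw [omegaCoef, iInf_lt_iff] at h2ω
    obtain ⟨t₀, h2ω⟩ := h2ω
    rw [iInf_lt_iff] at h2ω
    obtain ⟨ht₀, hS⟩ := h2ω
    set W : ℝ := (2 * omegaCoef φ).toReal with hWdef
    have h2ωne0 : (2 : ℝ≥0∞) * omegaCoef φ ≠ 0 := mul_ne_zero two_ne_zero hω0
    have h2ωnetop : (2 : ℝ≥0∞) * omegaCoef φ ≠ ⊤ :=
      ENNReal.mul_ne_top (by simp) hωtop
    have hW0 : 0 < W := ENNReal.toReal_pos h2ωne0 h2ωnetop
    have hupper : ∀ x y : X, ‖x - y‖ ≤ t₀ → ‖φ x - φ y‖ ≤ ε * (W / ε) := by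
      intro x y hxy
      have h1 : (‖φ x - φ y‖₊ : ℝ≥0∞) ≤ ENNReal.ofReal W := by
        rw [hWdef, ENNReal.ofReal_toReal h2ωnetop]
        have hle : (‖φ x - φ y‖₊ : ℝ≥0∞)
            ≤ ⨆ (x : X) (y : X) (_ : ‖x - y‖ ≤ t₀), (‖φ x - φ y‖₊ : ℝ≥0∞) := by
          apply le_iSup_of_le x
          apply le_iSup_of_le y
          apply le_iSup_of_le hxy
          exact le_rfl
        exact le_of_lt (lt_of_le_of_lt hle hS)
      rw [← enorm_eq_nnnorm, ← ofReal_norm] at h1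
      have hWε : ε * (W / ε) = W := by field_simp
      rw [hWε]
      exact (ENNReal.ofReal_le_ofReal_iff (le_of_lt hW0)).1 h1
    have hlower : ∀ x y : X, t₁ ≤ ‖x - y‖ → K * (W / ε) ≤ ‖φ x - φ y‖ := by
      intro x y hxy
      have h1 : ENNReal.ofReal (2 * K / ε) * omegaCoef φ ≤ (‖φ x - φ y‖₊ : ℝ≥0∞) :=
        le_trans (le_of_lt hA)
          (iInf_le_of_le x (iInf_le_of_le y (iInf_le _ hxy)))
      have hMω : ENNReal.ofReal (2 * K / ε) * omegaCoef φ
          = ENNReal.ofReal (K * (W / ε)) := by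
        rw [← ENNReal.ofReal_toReal hωtop, ← ENNReal.ofReal_mul (by positivity)]
        congr 1
        have : W = 2 * (omegaCoef φ).toReal := by
          rw [hWdef, ENNReal.toReal_mul]
          norm_num
        rw [this]
        field_simp
      rw [hMω, ← enorm_eq_nnnorm, ← ofReal_norm] at h1
      exact (ENNReal.ofReal_le_ofReal_iff (norm_nonneg _)).1 h1
    exact mkTheta φ ε K (W / ε) t₀ t₁ (by positivity) ht₀ hupper hlower

theorem backwardDir {X E : Type*} [NormedAddCommGroup X] [NormedSpace ℝ X]
    [NormedAddCommGroup E] [NormedSpace ℝ E] [CompleteSpace E]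
    (hEE : ∃ (J : (E × E) →L[ℝ] E) (c : ℝ), 0 < c ∧ ∀ v : E × E, c * ‖v‖ ≤ ‖J v‖)
    (hsup : (⨆ φ : X → E, sepRatio φ) = ⊤) :
    ∃ ψ : X → E, CoarseEmbedding ψ := by
  obtain ⟨J, c, hc, hJc⟩ := hEE
  obtain ⟨e, heU, heL⟩ := iterBounds J c hc hJc
  set L : ℝ := ‖J‖ + 1 with hLdef
  have hL1 : (1:ℝ) ≤ L := by have := norm_nonneg J; rw [hLdef]; linarith
  have hL0 : (0:ℝ) < L := by linarith
  have hsup' : ∀ M : ℝ≥0∞, M < ⊤ → ∃ φ : X → E, M < sepRatio φ := by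
    intro M hM
    rw [← hsup] at hM
    exact lt_iSup_iff.1 hM
  have hθ := fun k : ℕ =>
    existsTheta hsup' ((1 / (2*L))^(k+1)) (((k:ℝ)+1) / c^(k+1))
      (by positivity) (by positivity)
  choose θ s hθ1 hθ2 using hθ
  -- key norm bound
  have key : ∀ (x y : X) (k : ℕ),
      ‖e k (θ k x - θ k y)‖ ≤ (1/2)^(k+1) * (‖x - y‖ + 1) := by
    intro x y k
    have hch := chainLem (θ k) ((1 / (2*L))^(k+1)) (by positivity) (hθ1 k) x y
    have hd1 : (0:ℝ) ≤ ‖x - y‖ + 1 := by positivity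
    calc ‖e k (θ k x - θ k y)‖ ≤ L^(k+1) * ‖θ k x - θ k y‖ := heU k _
      _ ≤ L^(k+1) * ((1/(2*L))^(k+1) * (‖x - y‖ + 1)) := by
          apply mul_le_mul_of_nonneg_left hch (by positivity)
      _ = (L * (1/(2*L)))^(k+1) * (‖x - y‖ + 1) := by rw [mul_pow, mul_assoc]
      _ = (1/2)^(k+1) * (‖x - y‖ + 1) := by
          congr 2
          field_simp
  have hgeom : ∀ r : ℝ, Summable (fun k : ℕ => (1/2:ℝ)^(k+1) * (r + 1)) := by
    intro r
    apply Summable.congr ((summable_geometric_two).mul_right ((1/2) * (r+1)))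
    intro k
    rw [pow_succ]
    ring
  have hsum : ∀ x y : X, Summable (fun k => e k (θ k x - θ k y)) := by
    intro x y
    exact Summable.of_norm_bounded (hgeom ‖x - y‖) (key x y)
  have hsumn : ∀ x y : X, Summable (fun k => ‖e k (θ k x - θ k y)‖) := by
    intro x y
    exact Summable.of_nonneg_of_le (fun k => norm_nonneg _) (key x y) (hgeom ‖x - y‖)
  set ψ : X → E := fun x => ∑' k, e k (θ k x - θ k 0) with hψdef
  have hdiff : ∀ x y : X, ψ x - ψ y = ∑' k, e k (θ k x - θ k y) := by
    intro x y
    rw [hψdef]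
    simp only
    rw [← Summable.tsum_sub (hsum x 0) (hsum y 0)]
    congr 1
    funext k
    rw [← map_sub]
    congr 1
    abel
  -- upper bound
  have hup : ∀ x y : X, ‖ψ x - ψ y‖ ≤ 2 * (‖x - y‖ + 1) := by
    intro x y
    rw [hdiff]
    calc ‖∑' k, e k (θ k x - θ k y)‖
        ≤ ∑' k, ‖e k (θ k x - θ k y)‖ := norm_tsum_le_tsum_norm (hsumn x y)
      _ ≤ ∑' k : ℕ, (1/2:ℝ)^(k+1) * (‖x - y‖ + 1) :=
          Summable.tsum_le_tsum (key x y) (hsumn x y) (hgeom ‖x - y‖)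
      _ = 2 * ((1/2) * (‖x - y‖ + 1)) := by
          rw [show (fun k : ℕ => (1/2:ℝ)^(k+1) * (‖x - y‖ + 1))
              = (fun k : ℕ => (1/2:ℝ)^k * ((1/2) * (‖x - y‖ + 1))) by
            funext k; rw [pow_succ]; ring]
          rw [tsum_mul_right, tsum_geometric_two]
      _ ≤ 2 * (‖x - y‖ + 1) := by nlinarith [norm_nonneg (x - y)]
  -- lower bound via partial sums
  have hlow : ∀ (x y : X) (k : ℕ),
      c^(k+1) * ‖θ k x - θ k y‖ ≤ ‖ψ x - ψ y‖ := by
    intro x y k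
    rw [hdiff x y]
    have hS := (hsum x y).hasSum
    have ht := hS.tendsto_sum_nat.norm
    apply ge_of_tendsto ht
    filter_upwards [Filter.eventually_ge_atTop (k+1)] with N hN
    exact heL N (fun j => θ j x - θ j y) k (by omega)
  -- define rho1
  classical
  set sk : ℕ → ℝ := fun k => max (s k) k with hskdef
  set ρ₁ : ℝ → ℝ := fun r =>
    ((((Finset.range (⌈r⌉₊ + 1)).filter (fun k => sk k ≤ r)).sup id : ℕ) : ℝ) with hρ₁def
  have hρ₁sound : ∀ x y : X, ρ₁ ‖x - y‖ ≤ ‖ψ x - ψ y‖ := by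
    intro x y
    set r := ‖x - y‖ with hr
    set F := (Finset.range (⌈r⌉₊ + 1)).filter (fun k => sk k ≤ r) with hF
    rcases F.eq_empty_or_nonempty with hFe | hFne
    · have : ρ₁ r = 0 := by
        rw [hρ₁def]
        simp only [← hF, hFe]
        simp
      rw [this]
      exact norm_nonneg _
    · obtain ⟨k₀, hk₀F, hsupeq⟩ := Finset.exists_mem_eq_sup F hFne id
      have hρval : ρ₁ r = (k₀ : ℝ) := by
        rw [hρ₁def]
        simp only [← hF, hsupeq]
        rfl
      have hk₀s : s k₀ ≤ r := by
        have := (Finset.mem_filter.1 hk₀F).2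
        exact le_trans (le_max_left _ _) this
      have h1 := hθ2 k₀ x y hk₀s
      have h2 := hlow x y k₀
      have hcp : (0:ℝ) < c^(k₀+1) := by positivity
      have h3 : ((k₀:ℝ)+1) ≤ ‖ψ x - ψ y‖ := by
        have : c^(k₀+1) * (((k₀:ℝ)+1) / c^(k₀+1)) = ((k₀:ℝ)+1) := by
          field_simp
        calc ((k₀:ℝ)+1) = c^(k₀+1) * (((k₀:ℝ)+1) / c^(k₀+1)) := this.symm
          _ ≤ c^(k₀+1) * ‖θ k₀ x - θ k₀ y‖ :=
              mul_le_mul_of_nonneg_left h1 (le_of_lt hcp)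
          _ ≤ ‖ψ x - ψ y‖ := h2
      rw [hρval]
      linarith
  have htend : Filter.Tendsto ρ₁ Filter.atTop Filter.atTop := by
    rw [Filter.tendsto_atTop_atTop]
    intro b
    set k : ℕ := ⌈max b 0⌉₊ with hk
    have hbk : b ≤ (k:ℝ) := le_trans (le_max_left b 0) (Nat.le_ceil _)
    refine ⟨sk k, ?_⟩
    intro a ha
    have hka : (k:ℝ) ≤ a := le_trans (le_max_right (s k) k) ha
    have hkmem : k ∈ Finset.range (⌈a⌉₊ + 1) := by
      rw [Finset.mem_range]
      have : (k:ℝ) ≤ (⌈a⌉₊ : ℝ) := le_trans hka (Nat.le_ceil a)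
      have : k ≤ ⌈a⌉₊ := by exact_mod_cast this
      omega
    have hkF : k ∈ (Finset.range (⌈a⌉₊ + 1)).filter (fun j => sk j ≤ a) :=
      Finset.mem_filter.2 ⟨hkmem, ha⟩
    have : k ≤ ((Finset.range (⌈a⌉₊ + 1)).filter (fun j => sk j ≤ a)).sup id :=
      Finset.le_sup (f := id) hkF
    calc b ≤ (k:ℝ) := hbk
      _ ≤ ρ₁ a := by
          rw [hρ₁def]
          simp only []
          exact_mod_cast this
  exact ⟨ψ, ρ₁, fun r => 2 * (r + 1), htend, fun x y => ⟨hρ₁sound x y, hup x y⟩⟩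

theorem forwardDir {X E : Type*} [NormedAddCommGroup X] [NormedSpace ℝ X]
    [NormedAddCommGroup E]
    (hX : 2 ≤ Module.rank ℝ X) (ψ : X → E) (h : CoarseEmbedding ψ) :
    (⨆ φ : X → E, sepRatio φ) = ⊤ := by
  obtain ⟨ρ₁, ρ₂, htend, hb⟩ := h
  have hrank : 1 < Module.rank ℝ X := lt_of_lt_of_le Cardinal.one_lt_two hX
  -- sphere intersection
  have hsph : ∀ x y : X, ‖x - y‖ ≤ 1 → ∃ z : X, ‖x - z‖ = 1 ∧ ‖z - y‖ = 1 := by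
    intro x y hxy
    have hconn := isConnected_sphere hrank x zero_le_one
    by_cases hd : ‖x - y‖ = 0
    · have hxy' : x = y := by
        rw [← sub_eq_zero]
        exact norm_eq_zero.1 hd
      obtain ⟨z, hz⟩ := hconn.nonempty
      have hz1 : dist z x = 1 := Metric.mem_sphere.1 hz
      refine ⟨z, ?_, ?_⟩
      · rw [← dist_eq_norm, dist_comm]
        exact hz1
      · rw [← hxy', ← dist_eq_norm]
        exact hz1
    · have hd0 : 0 < ‖x - y‖ := lt_of_le_of_ne (norm_nonneg _) (Ne.symm hd)
      set d := ‖x - y‖ with hddef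
      have hyx : ‖y - x‖ = d := by rw [hddef, norm_sub_rev]
      have hdinv : 1 ≤ d⁻¹ := one_le_inv_iff₀.2 ⟨hd0, hxy⟩
      set z₂ : X := x + d⁻¹ • (y - x) with hz₂def
      set z₁ : X := x - d⁻¹ • (y - x) with hz₁def
      have hz₂mem : z₂ ∈ Metric.sphere x 1 := by
        rw [Metric.mem_sphere, dist_eq_norm, hz₂def]
        have : x + d⁻¹ • (y - x) - x = d⁻¹ • (y - x) := by abel
        rw [this, norm_smul, Real.norm_eq_abs, abs_of_pos (inv_pos.2 hd0), hyx]
        field_simp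
      have hz₁mem : z₁ ∈ Metric.sphere x 1 := by
        rw [Metric.mem_sphere, dist_eq_norm, hz₁def]
        have : x - d⁻¹ • (y - x) - x = -(d⁻¹ • (y - x)) := by abel
        rw [this, norm_neg, norm_smul, Real.norm_eq_abs, abs_of_pos (inv_pos.2 hd0), hyx]
        field_simp
      have hfz₂ : ‖z₂ - y‖ = 1 - d := by
        have heq : z₂ - y = (d⁻¹ - 1) • (y - x) := by
          rw [hz₂def, sub_smul, one_smul]
          abel
        rw [heq, norm_smul, Real.norm_eq_abs, abs_of_nonneg (by linarith), hyx]
        field_simp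
      have hfz₁ : ‖z₁ - y‖ = 1 + d := by
        have heq : z₁ - y = (-(d⁻¹) - 1) • (y - x) := by
          rw [hz₁def, sub_smul, one_smul, neg_smul]
          abel
        rw [heq, norm_smul, Real.norm_eq_abs, abs_of_nonpos (by linarith), hyx]
        have : -(-d⁻¹ - 1) = d⁻¹ + 1 := by ring
        rw [this]
        field_simp
      have hcont : ContinuousOn (fun z : X => ‖z - y‖) (Metric.sphere x 1) :=
        (Continuous.norm (continuous_id.sub continuous_const)).continuousOn
      have hIVT := hconn.isPreconnected.intermediate_value hz₂mem hz₁mem hcont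
      have h1mem : (1:ℝ) ∈ Set.Icc ‖z₂ - y‖ ‖z₁ - y‖ := by
        rw [hfz₂, hfz₁]
        constructor <;> linarith
      obtain ⟨z, hzs, hz1⟩ := hIVT h1mem
      refine ⟨z, ?_, hz1⟩
      have := Metric.mem_sphere.1 hzs
      rw [← dist_eq_norm, dist_comm]
      exact this
  -- bounded oscillation at scale 1
  have hC : ∀ x y : X, ‖x - y‖ ≤ 1 → ‖ψ x - ψ y‖ ≤ 2 * ρ₂ 1 := by
    intro x y hxy
    obtain ⟨z, hz1, hz2⟩ := hsph x y hxy
    have h1 : ‖ψ x - ψ z‖ ≤ ρ₂ 1 := by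
      have := (hb x z).2
      rwa [hz1] at this
    have h2 : ‖ψ z - ψ y‖ ≤ ρ₂ 1 := by
      have := (hb z y).2
      rwa [hz2] at this
    calc ‖ψ x - ψ y‖ = ‖(ψ x - ψ z) + (ψ z - ψ y)‖ := by abel_nf
      _ ≤ ‖ψ x - ψ z‖ + ‖ψ z - ψ y‖ := norm_add_le _ _
      _ ≤ 2 * ρ₂ 1 := by linarith
  -- omega finite
  have hω : omegaCoef ψ ≠ ⊤ := by
    apply ne_top_of_le_ne_top (@ENNReal.ofReal_ne_top (2 * ρ₂ 1))
    calc omegaCoef ψ ≤ ⨆ (x : X) (y : X) (_ : ‖x - y‖ ≤ 1), (‖ψ x - ψ y‖₊ : ℝ≥0∞) := by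
          rw [omegaCoef]
          exact iInf_le_of_le 1 (iInf_le _ one_pos)
      _ ≤ ENNReal.ofReal (2 * ρ₂ 1) := by
          apply iSup_le; intro x; apply iSup_le; intro y; apply iSup_le; intro hxy
          rw [← enorm_eq_nnnorm, ← ofReal_norm]
          exact ENNReal.ofReal_le_ofReal (hC x y hxy)
  -- kappa infinite
  have hκ : kappaCoef ψ = ⊤ := by
    apply le_antisymm le_top
    rw [← ENNReal.iSup_natCast]
    apply iSup_le
    intro n
    obtain ⟨T, hT⟩ := Filter.tendsto_atTop_atTop.1 htend (n : ℝ)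
    calc (n : ℝ≥0∞)
        ≤ ⨅ (x : X) (y : X) (_ : max T 0 ≤ ‖x - y‖), (‖ψ x - ψ y‖₊ : ℝ≥0∞) := by
          apply le_iInf; intro x; apply le_iInf; intro y; apply le_iInf; intro hxy
          have hρ : (n:ℝ) ≤ ρ₁ ‖x - y‖ :=
            hT _ (le_trans (le_max_left T 0) hxy)
          have : (n:ℝ) ≤ ‖ψ x - ψ y‖ := le_trans hρ (hb x y).1
          rw [← enorm_eq_nnnorm, ← ofReal_norm, ← ENNReal.ofReal_natCast]
          exact ENNReal.ofReal_le_ofReal this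
      _ ≤ kappaCoef ψ := by
          rw [kappaCoef]
          apply le_iSup_of_le (max T 0)
          apply le_iSup_of_le (le_max_right T 0)
          exact le_rfl
  have hsep : sepRatio ψ = ⊤ := by
    rw [sepRatio, hκ, ENNReal.top_div, if_neg hω]
  apply le_antisymm le_top
  rw [← hsep]
  exact le_iSup (fun φ : X → E => sepRatio φ) ψ

theorem coarse_embedding_iff_sup_sepRatio {X E : Type*}
    [NormedAddCommGroup X] [NormedSpace ℝ X] [CompleteSpace X]
    [NormedAddCommGroup E] [NormedSpace ℝ E] [CompleteSpace E]
    (hX : 2 ≤ Module.rank ℝ X) (hE : 2 ≤ Module.rank ℝ E)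
    (hEE : ∃ (J : (E × E) →L[ℝ] E) (c : ℝ), 0 < c ∧ ∀ v : E × E, c * ‖v‖ ≤ ‖J v‖) :
    (∃ ψ : X → E, CoarseEmbedding ψ) ↔ (⨆ φ : X → E, sepRatio φ) = ⊤ := by
  constructor
  · rintro ⟨ψ, hψ⟩
    exact forwardDir hX ψ hψ
  · intro h
    exact backwardDir hEE h
end

section
/- Suppose X and E are Banach spaces (dim X ≥ 2) with sup_φ R̄(φ) = ∞, where the supremum ranges over all maps φ : X → E and R̄(φ) = κ̄(φ)/ω(φ) is the exact separation ratio. Then there is a map ψ : X → ℓ₂(E) that is Lipschitz for large distances and solvent. -/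
open scoped ENNReal NNReal

instance : Fact ((1 : ℝ≥0∞) ≤ 2) := ⟨one_le_two⟩

set_option linter.unusedSectionVars false
set_option linter.unusedVariables false
set_option linter.deprecated false

noncomputable section AuxLemmas

variable {X E : Type*} [NormedAddCommGroup X] [NormedSpace ℝ X]
  [NormedAddCommGroup E] [NormedSpace ℝ E]

lemma aux_chain (φ : X → E) (Δ ε : ℝ) (hΔ : 0 < Δ) (hε : 0 ≤ ε)
    (H2 : ∀ x y : X, ‖x - y‖ ≤ Δ → ‖φ x - φ y‖ ≤ ε) :
    ∀ (k : ℕ) (x y : X), ‖x - y‖ ≤ k * Δ → ‖φ x - φ y‖ ≤ k * ε := by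
  intro k
  induction k with
  | zero =>
    intro x y h
    have hxy : x = y := by
      have h0 : ‖x - y‖ = 0 := le_antisymm (by simpa using h) (norm_nonneg _)
      rwa [norm_sub_eq_zero_iff] at h0
    simp [hxy]
  | succ k ih =>
    intro x y h
    by_cases hd : ‖x - y‖ ≤ k * Δ
    · have h1 := ih x y hd
      have hk : (k : ℝ) * ε ≤ (k + 1 : ℕ) * ε := by
        push_cast; nlinarith
      exact h1.trans hk
    · push_neg at hd
      have hd0 : (0:ℝ) < ‖x - y‖ := lt_of_le_of_lt (by positivity) hd
      set d := ‖x - y‖ with hdd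
      set z := x + ((k * Δ) / d) • (y - x) with hz
      have e1 : x - z = ((k * Δ) / d) • (x - y) := by rw [hz]; module
      have e2 : z - y = (1 - (k * Δ) / d) • (x - y) := by rw [hz]; module
      have hfrac : (0:ℝ) ≤ (k * Δ) / d := by positivity
      have hxz : ‖x - z‖ = k * Δ := by
        rw [e1, norm_smul, Real.norm_eq_abs, abs_of_nonneg hfrac, ← hdd]
        field_simp
      have hzy : ‖z - y‖ ≤ Δ := by
        rw [e2, norm_smul, Real.norm_eq_abs, ← hdd]
        have hle : (k * Δ) / d ≤ 1 := by
          rw [div_le_one hd0]; exact hd.le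
        rw [abs_of_nonneg (by linarith)]
        have : (1 - (k * Δ) / d) * d = d - k * Δ := by field_simp
        rw [this]
        have : d ≤ (k + 1 : ℕ) * Δ := h
        push_cast at this
        linarith
      have hA : ‖φ x - φ z‖ ≤ k * ε := ih x z (le_of_eq hxz)
      have hB : ‖φ z - φ y‖ ≤ ε := H2 z y hzy
      have tri : ‖φ x - φ y‖ ≤ ‖φ x - φ z‖ + ‖φ z - φ y‖ := by
        have := dist_triangle (φ x) (φ z) (φ y)
        simpa [dist_eq_norm] using this
      push_cast
      linarith

lemma aux_lip (φ : X → E) (Δ ε : ℝ) (hΔ : 0 < Δ) (hε : 0 ≤ ε)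
    (H2 : ∀ x y : X, ‖x - y‖ ≤ Δ → ‖φ x - φ y‖ ≤ ε) :
    ∀ x y : X, ‖φ x - φ y‖ ≤ ε * (‖x - y‖ / Δ) + ε := by
  intro x y
  set k := ⌈‖x - y‖ / Δ⌉₊ with hk
  have h1 : ‖x - y‖ ≤ k * Δ := by
    have := Nat.le_ceil (‖x - y‖ / Δ)
    rw [← hk] at this
    calc ‖x - y‖ = ‖x - y‖ / Δ * Δ := by field_simp
      _ ≤ k * Δ := by nlinarith
  have h2 : (k:ℝ) ≤ ‖x - y‖ / Δ + 1 := by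
    have := Nat.ceil_lt_add_one (a := ‖x - y‖ / Δ) (by positivity)
    rw [← hk] at this
    linarith
  calc ‖φ x - φ y‖ ≤ k * ε := aux_chain φ Δ ε hΔ hε H2 k x y h1
    _ ≤ (‖x - y‖ / Δ + 1) * ε := by nlinarith
    _ = ε * (‖x - y‖ / Δ) + ε := by ring


lemma aux_coord [Nontrivial X] (φ : X → E) (n : ℕ) (hn : 1 ≤ n)
    (t₀ δ Δ ε : ℝ) (ht₀ : 0 ≤ t₀) (hδ : 0 < δ) (hΔ : 0 < Δ) (hε : 0 < ε)
    (hr : ((n:ℝ) * 2 ^ n + 2) * ε ≤ δ)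
    (H1 : ∀ x y : X, ‖x - y‖ = t₀ → δ ≤ ‖φ x - φ y‖)
    (H2 : ∀ x y : X, ‖x - y‖ ≤ Δ → ‖φ x - φ y‖ ≤ ε) :
    ∃ (g : X → E) (R : ℝ), g 0 = 0 ∧
      (∀ x y : X, ‖g x - g y‖ ≤ (‖x - y‖ + 1) * (1/2 : ℝ) ^ n) ∧
      (∀ x y : X, R ≤ ‖x - y‖ → ‖x - y‖ ≤ R + n → (n:ℝ) ≤ ‖g x - g y‖) := by
  have hn0 : (0:ℝ) < n := by exact_mod_cast hn
  have h2n : (1:ℝ) ≤ 2 ^ n := one_le_pow₀ (by norm_num)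
  have hn1 : (1:ℝ) ≤ (n:ℝ) := by exact_mod_cast hn
  have h3 : (1:ℝ) ≤ (n:ℝ) * 2 ^ n := by
    nlinarith [mul_le_mul_of_nonneg_left h2n (by linarith : (0:ℝ) ≤ (n:ℝ))]
  have hεδ : 2 * ε < δ := by nlinarith [mul_le_mul_of_nonneg_right h3 hε.le]
  have hΔt : Δ < t₀ := by
    by_contra hcon
    push_neg at hcon
    obtain ⟨u, hu⟩ := exists_ne (0 : X)
    have hu0 : ‖u‖ ≠ 0 := norm_ne_zero_iff.mpr hu
    have hv : ‖(t₀ / ‖u‖) • u - 0‖ = t₀ := by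
      rw [sub_zero, norm_smul, Real.norm_eq_abs, abs_of_nonneg (by positivity)]
      field_simp
    have hA := H1 _ 0 hv
    have hB := H2 ((t₀ / ‖u‖) • u) 0 (by rw [hv]; exact hcon)
    linarith
  have L1 := aux_lip φ Δ ε hΔ hε.le H2
  have L2 : ∀ x y : X, t₀ - Δ ≤ ‖x - y‖ → ‖x - y‖ ≤ t₀ + Δ → δ - ε ≤ ‖φ x - φ y‖ := by
    intro x y h1 h2
    have hs0 : 0 < ‖x - y‖ := lt_of_lt_of_le (by linarith) h1
    set s := ‖x - y‖ with hs
    set z := x + (t₀ / s) • (y - x) with hz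
    have e1 : x - z = (t₀ / s) • (x - y) := by rw [hz]; module
    have e2 : z - y = (1 - t₀ / s) • (x - y) := by rw [hz]; module
    have hxz : ‖x - z‖ = t₀ := by
      rw [e1, norm_smul, Real.norm_eq_abs, abs_of_nonneg (by positivity), ← hs]
      field_simp
    have hzy : ‖z - y‖ ≤ Δ := by
      rw [e2, norm_smul, Real.norm_eq_abs, ← hs]
      have hss : (1 - t₀ / s) * s = s - t₀ := by field_simp
      have habs : |1 - t₀ / s| * s = |s - t₀| := by
        calc |1 - t₀ / s| * s = |1 - t₀ / s| * |s| := by rw [abs_of_pos hs0]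
          _ = |(1 - t₀ / s) * s| := (abs_mul _ _).symm
          _ = |s - t₀| := by rw [hss]
      rw [habs]
      rw [abs_le]
      constructor <;> linarith
    have hA := H1 x z hxz
    have hB := H2 z y hzy
    have tri : ‖φ x - φ z‖ ≤ ‖φ x - φ y‖ + ‖φ y - φ z‖ := by
      have := dist_triangle (φ x) (φ y) (φ z)
      simpa [dist_eq_norm] using this
    have : ‖φ y - φ z‖ = ‖φ z - φ y‖ := norm_sub_rev _ _
    linarith
  set β := (1/2 : ℝ) ^ n with hβdef
  have hβ : 0 < β := by positivity
  have hβ2 : β * 2 ^ n = 1 := by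
    rw [hβdef, ← mul_pow]; norm_num
  set c := β / ε with hc
  set μ := Δ / n with hμdef
  have hμ : 0 < μ := div_pos hΔ hn0
  have hcpos : 0 < c := div_pos hβ hε
  refine ⟨fun x => c • (φ (μ • x) - φ 0), (t₀ - Δ)/μ, by simp, ?_, ?_⟩
  · intro x y
    have hdist : ‖μ • x - μ • y‖ = μ * ‖x - y‖ := by
      rw [← smul_sub, norm_smul, Real.norm_eq_abs, abs_of_pos hμ]
    have e : c • (φ (μ • x) - φ 0) - c • (φ (μ • y) - φ 0)
        = c • (φ (μ • x) - φ (μ • y)) := by module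
    rw [e, norm_smul, Real.norm_eq_abs, abs_of_pos hcpos]
    have hL := L1 (μ • x) (μ • y)
    rw [hdist] at hL
    have e3 : ε * (μ * ‖x - y‖ / Δ) + ε = ε * (‖x - y‖ / n + 1) := by
      rw [hμdef]; field_simp
    rw [e3] at hL
    have hle : ‖x - y‖ / n ≤ ‖x - y‖ := by
      apply div_le_self (norm_nonneg _) (by exact_mod_cast hn)
    have hcε : c * ε = β := by rw [hc]; field_simp
    calc c * ‖φ (μ • x) - φ (μ • y)‖ ≤ c * (ε * (‖x - y‖ / n + 1)) :=
        mul_le_mul_of_nonneg_left hL hcpos.le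
      _ = β * (‖x - y‖ / n + 1) := by
        rw [show c * (ε * (‖x - y‖ / n + 1)) = c * ε * (‖x - y‖ / n + 1) from by ring, hcε]
      _ ≤ β * (‖x - y‖ + 1) := mul_le_mul_of_nonneg_left (by linarith) hβ.le
      _ = (‖x - y‖ + 1) * β := by ring
  · intro x y hR1 hR2
    have hdist : ‖μ • x - μ • y‖ = μ * ‖x - y‖ := by
      rw [← smul_sub, norm_smul, Real.norm_eq_abs, abs_of_pos hμ]
    have hμn : μ * n = Δ := by rw [hμdef]; field_simp
    have hlo : t₀ - Δ ≤ μ * ‖x - y‖ := by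
      have h7 := mul_le_mul_of_nonneg_left hR1 hμ.le
      rwa [mul_comm μ ((t₀ - Δ)/μ), div_mul_cancel₀ _ hμ.ne'] at h7
    have hhi : μ * ‖x - y‖ ≤ t₀ + Δ := by
      have h7 := mul_le_mul_of_nonneg_left hR2 hμ.le
      rw [mul_add, mul_comm μ ((t₀ - Δ)/μ), div_mul_cancel₀ _ hμ.ne', hμn] at h7
      linarith
    have hL := L2 (μ • x) (μ • y) (by rw [hdist]; exact hlo) (by rw [hdist]; exact hhi)
    have e : c • (φ (μ • x) - φ 0) - c • (φ (μ • y) - φ 0)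
        = c • (φ (μ • x) - φ (μ • y)) := by module
    rw [e, norm_smul, Real.norm_eq_abs, abs_of_pos hcpos]
    have key : (n:ℝ) * ε ≤ β * (δ - ε) := by
      have h5 : β * (((n:ℝ) * 2 ^ n + 2) * ε) ≤ β * δ := by nlinarith
      have h6 : β * 2 ^ n * ((n:ℝ) * ε) = (n:ℝ) * ε := by rw [hβ2]; ring
      nlinarith [h5, h6, mul_pos hβ hε]
    calc (n:ℝ) ≤ β * (δ - ε) / ε := by rw [le_div_iff₀ hε]; linarith
      _ = c * (δ - ε) := by rw [hc]; ring
      _ ≤ c * ‖φ (μ • x) - φ (μ • y)‖ := mul_le_mul_of_nonneg_left hL hcpos.le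

lemma aux_extract (φ : X → E) (M : ℝ) (hM : 1 ≤ M)
    (h : ENNReal.ofReal M < sepRatioBar φ) :
    ∃ t₀ δ Δ ε : ℝ, 0 ≤ t₀ ∧ 0 < δ ∧ 0 < Δ ∧ 0 < ε ∧ M * ε ≤ δ ∧
      (∀ x y : X, ‖x - y‖ = t₀ → δ ≤ ‖φ x - φ y‖) ∧
      (∀ x y : X, ‖x - y‖ ≤ Δ → ‖φ x - φ y‖ ≤ ε) := by
  have hM0 : ENNReal.ofReal M ≠ 0 := (ENNReal.ofReal_pos.mpr (by linarith)).ne'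
  have hMt : ENNReal.ofReal M ≠ ⊤ := ENNReal.ofReal_ne_top
  have hsep : sepRatioBar φ = kappaBarCoef φ / omegaCoef φ := rfl
  rw [hsep] at h
  have hωt : omegaCoef φ ≠ ⊤ := by
    intro hh
    rw [hh, ENNReal.div_top] at h
    simp at h
  have hmul : ENNReal.ofReal M * omegaCoef φ < kappaBarCoef φ := by
    rcases eq_or_ne (omegaCoef φ) 0 with h0 | h0
    · rw [h0, mul_zero]
      by_contra hk
      push_neg at hk
      have hk0 : kappaBarCoef φ = 0 := le_antisymm hk zero_le
      rw [hk0, h0, ENNReal.zero_div] at h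
      simp at h
    · exact (ENNReal.lt_div_iff_mul_lt (Or.inl h0) (Or.inl hωt)).mp h
  have hκ : kappaBarCoef φ = ⨆ (t : ℝ) (_ : 0 ≤ t), kappaBarMod φ t := rfl
  rw [hκ] at hmul
  rw [lt_iSup_iff] at hmul
  obtain ⟨t₀, hmul⟩ := hmul
  rw [lt_iSup_iff] at hmul
  obtain ⟨ht₀, hmod⟩ := hmul
  set δ' := min (kappaBarMod φ t₀) (ENNReal.ofReal M * omegaCoef φ + 1) with hδ'def
  have hMω : ENNReal.ofReal M * omegaCoef φ ≠ ⊤ := ENNReal.mul_ne_top hMt hωt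
  have hlt : ENNReal.ofReal M * omegaCoef φ < δ' :=
    lt_min hmod (ENNReal.lt_add_right hMω one_ne_zero)
  have hδ't : δ' ≠ ⊤ := by
    apply ne_top_of_le_ne_top _ (min_le_right _ _)
    exact ENNReal.add_ne_top.mpr ⟨hMω, ENNReal.one_ne_top⟩
  have hδ'0 : δ' ≠ 0 := by
    intro hh
    rw [hh] at hlt
    simp at hlt
  have hωlt : omegaCoef φ < δ' / ENNReal.ofReal M := by
    rw [ENNReal.lt_div_iff_mul_lt (Or.inl hM0) (Or.inl hMt), mul_comm]
    exact hlt
  have hω : omegaCoef φ = ⨅ (t : ℝ) (_ : 0 < t), omegaMod φ t := rfl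
  rw [hω, iInf_lt_iff] at hωlt
  obtain ⟨Δ, hωlt⟩ := hωlt
  rw [iInf_lt_iff] at hωlt
  obtain ⟨hΔ, hΔlt⟩ := hωlt
  have hδpos : 0 < δ'.toReal := ENNReal.toReal_pos hδ'0 hδ't
  have hdivtop : δ' / ENNReal.ofReal M ≠ ⊤ := by
    simp [ENNReal.div_eq_top, hδ't, hM0]
  have hdivtoReal : (δ' / ENNReal.ofReal M).toReal = δ'.toReal / M := by
    rw [ENNReal.toReal_div, ENNReal.toReal_ofReal (by linarith)]
  refine ⟨t₀, δ'.toReal, Δ, δ'.toReal / M, ht₀, hδpos, hΔ,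
    div_pos hδpos (by linarith), le_of_eq (by field_simp), ?_, ?_⟩
  · intro x y hxy
    have h1 : δ' ≤ (‖φ x - φ y‖₊ : ℝ≥0∞) := by
      refine le_trans (min_le_left _ _) ?_
      exact iInf_le_of_le x (iInf_le_of_le y (iInf_le _ hxy))
    have := (ENNReal.toReal_le_toReal hδ't ENNReal.coe_ne_top).mpr h1
    simpa using this
  · intro x y hxy
    have h1 : (‖φ x - φ y‖₊ : ℝ≥0∞) ≤ omegaMod φ Δ := by
      refine le_iSup_of_le x (le_iSup_of_le y ?_)
      exact le_iSup_of_le hxy le_rfl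
    have h2 : (‖φ x - φ y‖₊ : ℝ≥0∞) ≤ δ' / ENNReal.ofReal M := h1.trans hΔlt.le
    have := (ENNReal.toReal_le_toReal ENNReal.coe_ne_top hdivtop).mpr h2
    rw [hdivtoReal] at this
    simpa using this

end AuxLemmas



theorem lipschitz_solvent_into_lp {X E : Type*}
    [NormedAddCommGroup X] [NormedSpace ℝ X] [CompleteSpace X]
    [NormedAddCommGroup E] [NormedSpace ℝ E] [CompleteSpace E]
    (hX : 2 ≤ Module.rank ℝ X)
    (hsup : (⨆ φ : X → E, sepRatioBar φ) = ⊤) :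
    ∃ ψ : X → lp (fun _ : ℕ => E) 2, LipschitzLarge ψ ∧ Solvent ψ := by
  haveI : Nontrivial X := by
    refine rank_pos_iff_nontrivial.mp (lt_of_lt_of_le ?_ hX)
    exact zero_lt_two
  have key : ∀ n : ℕ, ∃ (g : X → E) (R : ℝ), g 0 = 0 ∧
      (∀ x y : X, ‖g x - g y‖ ≤ (‖x - y‖ + 1) * (1/2 : ℝ) ^ n) ∧
      (1 ≤ n → ∀ x y : X, R ≤ ‖x - y‖ → ‖x - y‖ ≤ R + n → (n:ℝ) ≤ ‖g x - g y‖) := by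
    intro n
    rcases Nat.eq_zero_or_pos n with h0 | h1
    · refine ⟨fun _ => 0, 0, rfl, ?_, ?_⟩
      · intro x y
        subst h0
        simp only [sub_zero, norm_zero, pow_zero, mul_one]
        positivity
      · intro hcon
        omega
    · set M : ℝ := (n:ℝ) * 2 ^ n + 2 with hM
      have hM1 : 1 ≤ M := by
        have : (0:ℝ) ≤ (n:ℝ) * 2 ^ n := by positivity
        rw [hM]; linarith
      obtain ⟨φ, hφ⟩ : ∃ φ : X → E, ENNReal.ofReal M < sepRatioBar φ := by
        have hlt : ENNReal.ofReal M < ⨆ φ : X → E, sepRatioBar φ := by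
          rw [hsup]; exact ENNReal.ofReal_lt_top
        exact lt_iSup_iff.mp hlt
      obtain ⟨t₀, δ, Δ, ε, ht₀, hδ, hΔ, hε, hMε, H1, H2⟩ := aux_extract φ M hM1 hφ
      rw [hM] at hMε
      obtain ⟨g, R, hg0, hup, hlow⟩ := aux_coord φ n h1 t₀ δ Δ ε ht₀ hδ hΔ hε hMε H1 H2
      exact ⟨g, R, hg0, hup, fun _ => hlow⟩
  choose g R hg0 hup hlow using key
  have htR : (2 : ℝ≥0∞).toReal = 2 := by simp
  have hgeo : Summable (fun n : ℕ => ((1:ℝ)/4) ^ n) :=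
    summable_geometric_of_lt_one (by norm_num) (by norm_num)
  have hsq : ∀ (a : ℝ) (n : ℕ), 0 ≤ a → ((a * (1/2:ℝ)^n) ^ 2 = a ^ 2 * (1/4:ℝ)^n) := by
    intro a n _
    rw [mul_pow, ← pow_mul, mul_comm n 2, pow_mul]
    norm_num
  -- generic squared bound
  have hbound : ∀ (x y : X) (n : ℕ),
      ‖g n x - g n y‖ ^ (2:ℝ≥0∞).toReal ≤ (‖x - y‖ + 1) ^ 2 * (1/4:ℝ)^n := by
    intro x y n
    have hb := hup n x y
    have h1 : ‖g n x - g n y‖ ^ (2:ℝ≥0∞).toReal = ‖g n x - g n y‖ ^ (2:ℕ) := by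
      rw [htR, show (2:ℝ) = ((2:ℕ):ℝ) by norm_num, Real.rpow_natCast]
    rw [h1]
    calc ‖g n x - g n y‖ ^ 2 ≤ ((‖x - y‖ + 1) * (1/2:ℝ)^n) ^ 2 :=
        pow_le_pow_left₀ (norm_nonneg _) hb 2
      _ = (‖x - y‖ + 1) ^ 2 * (1/4:ℝ)^n := hsq _ n (by positivity)
  have hsummable : ∀ x y : X, Summable
      (fun n : ℕ => ‖g n x - g n y‖ ^ (2:ℝ≥0∞).toReal) := by
    intro x y
    apply Summable.of_nonneg_of_le (fun n => by positivity) (hbound x y)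
    exact hgeo.mul_left _
  have hmem : ∀ x : X, Memℓp (fun n => g n x) 2 := by
    intro x
    apply memℓp_gen
    have := hsummable x 0
    simpa [hg0] using this
  set ψ : X → lp (fun _ : ℕ => E) 2 := fun x => ⟨fun n => g n x, hmem x⟩ with hψ
  have hcoe : ∀ (x y : X) (n : ℕ), (ψ x - ψ y : lp (fun _ : ℕ => E) 2) n = g n x - g n y := by
    intro x y n
    rw [lp.coeFn_sub]
    rfl
  refine ⟨ψ, ⟨2, ?_⟩, ⟨R, ?_⟩⟩
  · intro x y
    set d := ‖x - y‖ with hd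
    have hd0 : 0 ≤ d := norm_nonneg _
    have hp2 : (0:ℝ) < (2:ℝ≥0∞).toReal := by rw [htR]; norm_num
    rw [lp.norm_eq_tsum_rpow hp2]
    have hterm : ∀ n : ℕ, ‖(ψ x - ψ y : lp (fun _ : ℕ => E) 2) n‖ ^ (2:ℝ≥0∞).toReal
        ≤ (d + 1) ^ 2 * (1/4:ℝ)^n := by
      intro n
      rw [hcoe x y n]
      exact hbound x y n
    have hsum1 : Summable (fun n : ℕ =>
        ‖(ψ x - ψ y : lp (fun _ : ℕ => E) 2) n‖ ^ (2:ℝ≥0∞).toReal) := by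
      apply Summable.of_nonneg_of_le (fun n => by positivity) hterm
      exact hgeo.mul_left _
    have hsum_le : (∑' n : ℕ, ‖(ψ x - ψ y : lp (fun _ : ℕ => E) 2) n‖ ^ (2:ℝ≥0∞).toReal)
        ≤ (d + 1) ^ 2 * (4/3 : ℝ) := by
      calc (∑' n : ℕ, ‖(ψ x - ψ y : lp (fun _ : ℕ => E) 2) n‖ ^ (2:ℝ≥0∞).toReal)
          ≤ ∑' n : ℕ, (d + 1) ^ 2 * (1/4:ℝ)^n :=
            Summable.tsum_le_tsum hterm hsum1 (hgeo.mul_left _)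
        _ = (d + 1) ^ 2 * (4/3 : ℝ) := by
            rw [tsum_mul_left, tsum_geometric_of_lt_one (by norm_num) (by norm_num)]
            norm_num
    have h43 : (d + 1) ^ 2 * (4/3 : ℝ) ≤ (2 * d + 2) ^ 2 := by nlinarith
    have hnn : 0 ≤ ∑' n : ℕ, ‖(ψ x - ψ y : lp (fun _ : ℕ => E) 2) n‖ ^ (2:ℝ≥0∞).toReal :=
      tsum_nonneg (fun n => by positivity)
    have hfin : ((2 * d + 2) ^ (2:ℕ) : ℝ) ^ ((1:ℝ)/2) = 2 * d + 2 := by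
      rw [← Real.rpow_natCast (2 * d + 2) 2, ← Real.rpow_mul (by linarith)]
      norm_num
    calc (∑' n : ℕ, ‖(ψ x - ψ y : lp (fun _ : ℕ => E) 2) n‖ ^ (2:ℝ≥0∞).toReal)
          ^ (1 / (2:ℝ≥0∞).toReal)
        ≤ (((2 * d + 2) ^ (2:ℕ) : ℝ)) ^ (1 / (2:ℝ≥0∞).toReal) := by
          apply Real.rpow_le_rpow hnn (hsum_le.trans h43)
          rw [htR]; norm_num
      _ = 2 * d + 2 := by rw [htR]; exact hfin
      _ = 2 * d + 2 := rfl
  · intro n hn x y h1 h2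
    have hl := hlow n hn x y h1 h2
    calc (n:ℝ) ≤ ‖g n x - g n y‖ := hl
      _ = ‖(ψ x - ψ y : lp (fun _ : ℕ => E) 2) n‖ := by rw [hcoe]
      _ ≤ ‖ψ x - ψ y‖ := lp.norm_apply_le_norm two_ne_zero _ n
end

section
/- Let X be a separable Banach space and E a Banach space admitting an infinite equilateral set. Then there is a map φ : X → E with R(φ) ≥ 1; in particular the coarse embeddability ratio satisfies CR(X,E) ≥ 1. -/
open scoped ENNReal NNReal

theorem sepRatio_ge_one_of_equilateral {X E : Type*}
    [NormedAddCommGroup X] [NormedSpace ℝ X] [CompleteSpace X]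
    [TopologicalSpace.SeparableSpace X]
    [NormedAddCommGroup E] [NormedSpace ℝ E] [CompleteSpace E]
    (A : Set E) (hA : A.Infinite) (δ : ℝ) (hδ : 0 < δ)
    (heq : ∀ x ∈ A, ∀ y ∈ A, x ≠ y → ‖x - y‖ = δ) :
    (∃ φ : X → E, 1 ≤ sepRatio φ) ∧ 1 ≤ ⨆ φ : X → E, sepRatio φ := by
  have hne : Nonempty X := ⟨0⟩
  set u : ℕ → X := TopologicalSpace.denseSeq X with hu
  have hdense : DenseRange u := TopologicalSpace.denseRange_denseSeq X
  have hex : ∀ x : X, ∃ n : ℕ, dist x (u n) < 1/2 := by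
    intro x
    exact Metric.denseRange_iff.1 hdense x (1/2) (by norm_num)
  let f : X → ℕ := fun x => Nat.find (hex x)
  have hf : ∀ x, dist x (u (f x)) < 1/2 := fun x => Nat.find_spec (hex x)
  let g : ℕ ↪ A := hA.natEmbedding A
  let φ : X → E := fun x => (g (f x) : E)
  have hval : ∀ x y : X, ‖φ x - φ y‖ = 0 ∨ ‖φ x - φ y‖ = δ := by
    intro x y
    by_cases h : f x = f y
    · left; simp [φ, h]
    · right
      refine heq _ (g (f x)).2 _ (g (f y)).2 ?_
      intro hc
      exact h (g.injective (Subtype.ext hc))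
  have hsame : ∀ x y : X, f x = f y → ‖x - y‖ < 1 := by
    intro x y h
    have h1 := hf x
    have h2 := hf y
    rw [h] at h1
    have := dist_triangle x (u (f y)) y
    rw [dist_comm (u (f y)) y] at this
    calc ‖x - y‖ = dist x y := (dist_eq_norm x y).symm
      _ ≤ _ := this
      _ < 1/2 + 1/2 := by linarith
      _ = 1 := by norm_num
  set D : ℝ≥0∞ := ENNReal.ofReal δ with hD
  have hD0 : D ≠ 0 := by simp [hD, hδ]
  have hDtop : D ≠ ⊤ := ENNReal.ofReal_ne_top
  -- ω(φ) ≤ D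
  have hω : omegaCoef φ ≤ D := by
    refine le_trans (iInf_le_of_le 1 ?_) le_rfl
    refine le_trans (iInf_le_of_le one_pos ?_) le_rfl
    refine iSup_le fun x => iSup_le fun y => iSup_le fun _ => ?_
    rcases hval x y with h | h
    · rw [show ((‖φ x - φ y‖₊ : ℝ≥0) : ℝ≥0∞) = ENNReal.ofReal ‖φ x - φ y‖ from
        (ofReal_norm _).symm, h]
      simp
    · rw [show ((‖φ x - φ y‖₊ : ℝ≥0) : ℝ≥0∞) = ENNReal.ofReal ‖φ x - φ y‖ from
        (ofReal_norm _).symm, h]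
  -- κ(φ) ≥ D
  have hκ : D ≤ kappaCoef φ := by
    refine le_trans ?_ (le_iSup_of_le 2 (le_iSup_of_le (by norm_num) le_rfl))
    refine le_iInf fun x => le_iInf fun y => le_iInf fun hxy => ?_
    have hne' : f x ≠ f y := by
      intro h
      have := hsame x y h
      linarith
    have hd : ‖φ x - φ y‖ = δ := by
      rcases hval x y with h | h
      · exfalso
        have : φ x = φ y := norm_sub_eq_zero_iff.mp h
        exact hne' (g.injective (Subtype.ext this))
      · exact h
    rw [show ((‖φ x - φ y‖₊ : ℝ≥0) : ℝ≥0∞) = ENNReal.ofReal ‖φ x - φ y‖ from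
        (ofReal_norm _).symm, hd]
  have hmain : 1 ≤ sepRatio φ := by
    have : D / D ≤ kappaCoef φ / omegaCoef φ := ENNReal.div_le_div hκ hω
    rwa [ENNReal.div_self hD0 hDtop] at this
  exact ⟨⟨φ, hmain⟩, le_trans hmain (le_iSup _ φ)⟩
end

section
/- Let (e_n) be a normalised basic sequence in a Banach space E and define on the closed linear span of (e_n) the norm |||Σ a_n e_n||| = sup{ ‖Σ_{n∈I} a_n e_n‖ + ‖Σ_{n∈J} a_n e_n‖ : I, J intervals of ℕ with max I < min J }. Then |||·||| is an equivalent norm on the closed span, and |||e_i − e_j||| = 2 for all i < j, so (e_n) is an infinite equilateral set for |||·|||. -/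
open scoped ENNReal NNReal

/-- The triple norm of the paper, evaluated on finitely supported coefficient
sequences: `|||Σ aₙ eₙ||| = sup { ‖Σ_{n∈I} aₙ eₙ‖ + ‖Σ_{n∈J} aₙ eₙ‖ }` over pairs of
intervals `I = [m₁, k₁]`, `J = [m₂, k₂]` of `ℕ` with `max I < min J`. -/
noncomputable def tripleNorm {E : Type*} [NormedAddCommGroup E] [NormedSpace ℝ E]
    (e : ℕ → E) (a : ℕ →₀ ℝ) : ℝ :=
  ⨆ p : {q : (ℕ × ℕ) × ℕ × ℕ // q.1.2 < q.2.1},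
    ‖∑ n ∈ Finset.Icc p.1.1.1 p.1.1.2, a n • e n‖ +
      ‖∑ n ∈ Finset.Icc p.1.2.1 p.1.2.2, a n • e n‖

theorem tripleNorm_equivalent_and_equilateral {E : Type*}
    [NormedAddCommGroup E] [NormedSpace ℝ E] [CompleteSpace E]
    (e : ℕ → E) (hnorm : ∀ n, ‖e n‖ = 1) (hli : LinearIndependent ℝ e)
    (C : ℝ) (hC : 0 < C)
    (hbasic : ∀ (a : ℕ → ℝ) (m k : ℕ), m ≤ k →
      ‖∑ n ∈ Finset.range m, a n • e n‖ ≤ C * ‖∑ n ∈ Finset.range k, a n • e n‖) :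
    (∃ c C' : ℝ, 0 < c ∧ 0 < C' ∧ ∀ a : ℕ →₀ ℝ,
      c * ‖∑ n ∈ a.support, a n • e n‖ ≤ tripleNorm e a ∧
        tripleNorm e a ≤ C' * ‖∑ n ∈ a.support, a n • e n‖) ∧
    ∀ i j : ℕ, i < j → tripleNorm e (Finsupp.single i 1 - Finsupp.single j 1) = 2 := by
  have hC1 : (1:ℝ) ≤ C := by
    have h := hbasic (fun n => if n = 0 then (1:ℝ) else 0) 1 1 le_rfl
    simpa [hnorm 0] using h
  constructor
  · refine ⟨1, 4*C, one_pos, by positivity, fun a => ?_⟩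
    set S := ∑ n ∈ a.support, a n • e n with hSdef
    set M := a.support.sup id with hM
    have hzero : ∀ n ∉ a.support, a n • e n = 0 := by
      intro n hn
      simp [Finsupp.notMem_support_iff.mp hn]
    have hsupp : ∀ j, a.support ⊆ Finset.range j →
        (∑ n ∈ Finset.range j, a n • e n) = S := by
      intro j hj
      exact (Finset.sum_subset hj (fun n _ hn => hzero n hn)).symm
    have hmem : a.support ⊆ Finset.range (M+1) := by
      intro n hn
      simp only [Finset.mem_range]
      exact Nat.lt_succ_of_le (Finset.le_sup (f := id) hn)
    have key : ∀ j, ‖∑ n ∈ Finset.range j, a n • e n‖ ≤ C * ‖S‖ := by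
      intro j
      rcases le_or_gt j (M+1) with h | h
      · have := hbasic (fun n => a n) j (M+1) h
        rwa [hsupp (M+1) hmem] at this
      · rw [hsupp j (hmem.trans (Finset.range_subset_range.mpr h.le))]
        nlinarith [norm_nonneg S]
    have hint : ∀ m k : ℕ, ‖∑ n ∈ Finset.Icc m k, a n • e n‖ ≤ 2*(C*‖S‖) := by
      intro m k
      rcases le_or_gt m (k+1) with h | h
      · rw [← Finset.Ico_add_one_right_eq_Icc, Finset.sum_Ico_eq_sub _ h]
        calc ‖(∑ n ∈ Finset.range (k+1), a n • e n) - ∑ n ∈ Finset.range m, a n • e n‖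
            ≤ ‖∑ n ∈ Finset.range (k+1), a n • e n‖ + ‖∑ n ∈ Finset.range m, a n • e n‖ :=
              norm_sub_le _ _
          _ ≤ C*‖S‖ + C*‖S‖ := add_le_add (key _) (key _)
          _ = 2*(C*‖S‖) := by ring
      · rw [Finset.Icc_eq_empty (by omega)]
        simp only [Finset.sum_empty, norm_zero]
        positivity
    have hb : BddAbove (Set.range fun p : {q : (ℕ × ℕ) × ℕ × ℕ // q.1.2 < q.2.1} =>
        ‖∑ n ∈ Finset.Icc p.1.1.1 p.1.1.2, a n • e n‖ +
          ‖∑ n ∈ Finset.Icc p.1.2.1 p.1.2.2, a n • e n‖) := by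
      refine ⟨4*(C*‖S‖), ?_⟩
      rintro x ⟨p, rfl⟩
      dsimp only
      have := add_le_add (hint p.1.1.1 p.1.1.2) (hint p.1.2.1 p.1.2.2)
      linarith
    constructor
    · rw [one_mul]
      have hle := le_ciSup hb ⟨((0, M), (M+1, M+1)), Nat.lt_succ_self M⟩
      refine le_trans ?_ hle
      have h1 : (∑ n ∈ Finset.Icc 0 M, a n • e n) = S := by
        refine (Finset.sum_subset ?_ (fun n _ hn => hzero n hn)).symm
        intro n hn
        simp only [Finset.mem_Icc]
        exact ⟨Nat.zero_le n, Finset.le_sup (f := id) hn⟩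
      have h2 : (∑ n ∈ Finset.Icc (M+1) (M+1), a n • e n) = 0 := by
        rw [Finset.Icc_self, Finset.sum_singleton]
        refine hzero _ ?_
        intro hmem'
        have := Finset.le_sup (f := id) hmem'
        simp only [id_eq, ← hM] at this
        omega
      simp only [h1, h2, norm_zero, add_zero, le_refl]
    · refine Real.iSup_le ?_ (by positivity)
      intro p
      have := add_le_add (hint p.1.1.1 p.1.1.2) (hint p.1.2.1 p.1.2.2)
      linarith
  · intro i j hij
    set a : ℕ →₀ ℝ := Finsupp.single i 1 - Finsupp.single j 1 with ha
    have hval : ∀ s : Finset ℕ, (∑ n ∈ s, a n • e n) =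
        (if i ∈ s then e i else 0) - (if j ∈ s then e j else 0) := by
      intro s
      have hterm : ∀ n, a n • e n =
          (if i = n then e n else 0) - (if j = n then e n else 0) := by
        intro n
        simp only [ha, Finsupp.sub_apply, Finsupp.single_apply, sub_smul, ite_smul,
          one_smul, zero_smul]
      rw [Finset.sum_congr rfl (fun n _ => hterm n), Finset.sum_sub_distrib,
        Finset.sum_ite_eq, Finset.sum_ite_eq]
    have hbound : ∀ m k : ℕ, ‖∑ n ∈ Finset.Icc m k, a n • e n‖ ≤
        (if i ∈ Finset.Icc m k then (1:ℝ) else 0) +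
          (if j ∈ Finset.Icc m k then (1:ℝ) else 0) := by
      intro m k
      rw [hval]
      refine le_trans (norm_sub_le _ _) (add_le_add ?_ ?_) <;>
        split_ifs <;> simp [hnorm]
    have hle : ∀ p : {q : (ℕ × ℕ) × ℕ × ℕ // q.1.2 < q.2.1},
        ‖∑ n ∈ Finset.Icc p.1.1.1 p.1.1.2, a n • e n‖ +
          ‖∑ n ∈ Finset.Icc p.1.2.1 p.1.2.2, a n • e n‖ ≤ 2 := by
      rintro ⟨⟨⟨m1, k1⟩, m2, k2⟩, hp⟩
      refine le_trans (add_le_add (hbound m1 k1) (hbound m2 k2)) ?_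
      simp only at hp
      simp only [Finset.mem_Icc]
      split_ifs <;> first | (exfalso; omega) | norm_num
    have hb : BddAbove (Set.range fun p : {q : (ℕ × ℕ) × ℕ × ℕ // q.1.2 < q.2.1} =>
        ‖∑ n ∈ Finset.Icc p.1.1.1 p.1.1.2, a n • e n‖ +
          ‖∑ n ∈ Finset.Icc p.1.2.1 p.1.2.2, a n • e n‖) :=
      ⟨2, by rintro x ⟨p, rfl⟩; exact hle p⟩
    rw [show tripleNorm e (Finsupp.single i 1 - Finsupp.single j 1) = tripleNorm e a from rfl]
    unfold tripleNorm
    apply le_antisymm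
    · exact Real.iSup_le hle (by norm_num)
    · have hge := le_ciSup hb ⟨((i, i), (j, j)), hij⟩
      refine le_trans ?_ hge
      rw [hval, hval]
      simp only [Finset.mem_Icc]
      rw [if_pos ⟨le_rfl, le_rfl⟩, if_neg (by omega), if_neg (by omega),
        if_pos ⟨le_rfl, le_rfl⟩]
      simp [hnorm]
      norm_num
end

section
/- Every infinite-dimensional Banach space admits an equivalent norm with respect to which it contains an infinite equilateral set. -/
open scoped ENNReal NNReal

section Aux

open Submodule Set

variable {E : Type*} [NormedAddCommGroup E] [NormedSpace ℝ E]

lemma exists_unit_in_kernels (hE : ¬ FiniteDimensional ℝ E) {ι : Type*} [Finite ι]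
    (g : ι → E →L[ℝ] ℝ) : ∃ y : E, ‖y‖ = 1 ∧ ∀ i, g i y = 0 := by
  classical
  have : ∃ x : E, x ≠ 0 ∧ ∀ i, g i x = 0 := by
    by_contra h
    push_neg at h
    have hinj : LinearMap.ker (LinearMap.pi (fun i => (g i : E →ₗ[ℝ] ℝ))) = ⊥ := by
      rw [LinearMap.ker_eq_bot']
      intro x hx
      by_contra hx0
      obtain ⟨i, hi⟩ := h x hx0
      exact hi (congrFun hx i)
    haveI : FiniteDimensional ℝ (ι → ℝ) := by
      have := Fintype.ofFinite ι; infer_instance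
    exact hE (FiniteDimensional.of_injective _ (LinearMap.ker_eq_bot.mp hinj))
  obtain ⟨x, hx0, hx⟩ := this
  refine ⟨‖x‖⁻¹ • x, ?_, fun i => by simp [hx i]⟩
  rw [norm_smul, norm_inv, norm_norm]
  field_simp [norm_ne_zero_iff.mpr hx0]

lemma mazur_step (hE : ¬ FiniteDimensional ℝ E) (F : Submodule ℝ E)
    [FiniteDimensional ℝ F] {δ : ℝ} (hδ : 0 < δ) :
    ∃ y : E, ‖y‖ = 1 ∧ ∀ f ∈ F, ∀ t : ℝ, (1 - δ) * ‖f‖ ≤ ‖f + t • y‖ := by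
  classical
  -- the unit sphere of F, as a subset of E
  set S : Set E := ((↑) '' (Metric.sphere (0 : F) 1)) with hS
  have hScomp : IsCompact S :=
    ((isCompact_sphere (0 : F) 1).image continuous_subtype_val)
  obtain ⟨t₀, ht₀S, ht₀fin, ht₀cov⟩ := hScomp.finite_cover_balls hδ
  haveI : Fintype t₀ := ht₀fin.fintype
  -- norming functionals
  have hne : ∀ u ∈ t₀, u ≠ 0 := by
    intro u hu
    obtain ⟨v, hv, rfl⟩ := ht₀S hu
    intro h0
    have : ‖(v : E)‖ = 1 := by
      simpa using mem_sphere_zero_iff_norm.mp hv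
    rw [h0] at this; simp at this
  choose g hg1 hg2 using fun (u : t₀) => exists_dual_vector ℝ (u : E) (norm_ne_zero_iff.mpr (hne u u.2))
  obtain ⟨y, hy1, hy2⟩ := exists_unit_in_kernels hE g
  refine ⟨y, hy1, ?_⟩
  have key : ∀ u ∈ S, ∀ t : ℝ, 1 - δ ≤ ‖u + t • y‖ := by
    intro u hu t
    obtain ⟨v, hvt, hv⟩ := Set.mem_iUnion₂.mp (ht₀cov hu)
    have hunorm : ‖u‖ = 1 := by
      obtain ⟨w, hw, rfl⟩ := hu
      simpa using mem_sphere_zero_iff_norm.mp hw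
    have hvnorm : ‖v‖ = 1 := by
      obtain ⟨w, hw, rfl⟩ := ht₀S hvt
      simpa using mem_sphere_zero_iff_norm.mp hw
    have h1 : g ⟨v, hvt⟩ (u + t • y) = g ⟨v, hvt⟩ u := by
      simp [map_add, map_smul, hy2 ⟨v, hvt⟩]
    have h2 : g ⟨v, hvt⟩ u = g ⟨v, hvt⟩ v + g ⟨v, hvt⟩ (u - v) := by
      rw [← map_add]; congr 1; abel
    have h3 : |g ⟨v, hvt⟩ (u - v)| ≤ δ := by
      calc |g ⟨v, hvt⟩ (u - v)| ≤ ‖g ⟨v, hvt⟩‖ * ‖u - v‖ := (g ⟨v, hvt⟩).le_opNorm _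
        _ ≤ 1 * δ := by
            refine mul_le_mul (le_of_eq (hg1 _)) ?_ (norm_nonneg _) zero_le_one
            exact le_of_lt (by simpa [dist_eq_norm] using Metric.mem_ball.mp hv)
        _ = δ := one_mul δ
    have h4 : (1 : ℝ) - δ ≤ g ⟨v, hvt⟩ (u + t • y) := by
      rw [h1, h2]
      have hval : g ⟨v, hvt⟩ v = 1 := by
        have := hg2 ⟨v, hvt⟩
        simpa [hvnorm] using this
      have := abs_le.mp h3
      rw [hval]
      linarith [this.1]
    calc (1 : ℝ) - δ ≤ g ⟨v, hvt⟩ (u + t • y) := h4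
      _ ≤ |g ⟨v, hvt⟩ (u + t • y)| := le_abs_self _
      _ ≤ ‖g ⟨v, hvt⟩‖ * ‖u + t • y‖ := (g ⟨v, hvt⟩).le_opNorm _
      _ = ‖u + t • y‖ := by rw [hg1]; ring
  intro f hf t
  rcases eq_or_ne f 0 with rfl | hf0
  · simp
  · have hfn : ‖f‖ ≠ 0 := norm_ne_zero_iff.mpr hf0
    have huS : ‖f‖⁻¹ • f ∈ S := by
      refine ⟨⟨‖f‖⁻¹ • f, Submodule.smul_mem F _ hf⟩, ?_, rfl⟩
      rw [mem_sphere_zero_iff_norm]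
      show ‖(‖f‖⁻¹ • f : E)‖ = 1
      rw [norm_smul, norm_inv, norm_norm]; field_simp
    have := key _ huS (‖f‖⁻¹ * t)
    have heq : ‖f‖ * ‖(‖f‖⁻¹ • f) + (‖f‖⁻¹ * t) • y‖ = ‖f + t • y‖ := by
      rw [← norm_smul_of_nonneg (norm_nonneg f)]
      congr 1
      rw [smul_add, smul_smul, smul_smul]
      field_simp
      rw [one_smul]
    calc (1 - δ) * ‖f‖ ≤ ‖f‖ * ‖(‖f‖⁻¹ • f) + (‖f‖⁻¹ * t) • y‖ := by
          rw [mul_comm]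
          exact mul_le_mul_of_nonneg_left this (norm_nonneg f)
      _ = ‖f + t • y‖ := heq

noncomputable def nextVec (hE : ¬ FiniteDimensional ℝ E) (l : List E) : E :=
  haveI := FiniteDimensional.span_of_finite ℝ l.finite_toSet
  (mazur_step hE (span ℝ {x | x ∈ l})
    (show (0:ℝ) < (1/2)^(l.length+2) by positivity)).choose

lemma nextVec_spec (hE : ¬ FiniteDimensional ℝ E) (l : List E) :
    ‖nextVec hE l‖ = 1 ∧ ∀ f ∈ span ℝ {x | x ∈ l}, ∀ t : ℝ,
      (1 - (1/2:ℝ)^(l.length+2)) * ‖f‖ ≤ ‖f + t • nextVec hE l‖ :=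
  haveI := FiniteDimensional.span_of_finite ℝ l.finite_toSet
  (mazur_step hE (span ℝ {x | x ∈ l})
    (show (0:ℝ) < (1/2)^(l.length+2) by positivity)).choose_spec

noncomputable def vsList (hE : ¬ FiniteDimensional ℝ E) : ℕ → List E
  | 0 => []
  | n+1 => vsList hE n ++ [nextVec hE (vsList hE n)]

noncomputable def ySeq (hE : ¬ FiniteDimensional ℝ E) (n : ℕ) : E :=
  nextVec hE (vsList hE n)

lemma vsList_length (hE : ¬ FiniteDimensional ℝ E) (n : ℕ) :
    (vsList hE n).length = n := by
  induction n with
  | zero => rfl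
  | succ n ih => simp [vsList, ih]

lemma mem_vsList (hE : ¬ FiniteDimensional ℝ E) (n : ℕ) (x : E) :
    x ∈ vsList hE n ↔ ∃ m, m < n ∧ ySeq hE m = x := by
  induction n with
  | zero => simp [vsList]
  | succ n ih =>
    simp only [vsList, List.mem_append, List.mem_singleton, ih]
    constructor
    · rintro (⟨m, hm, rfl⟩ | rfl)
      · exact ⟨m, Nat.lt_succ_of_lt hm, rfl⟩
      · exact ⟨n, Nat.lt_succ_self n, rfl⟩
    · rintro ⟨m, hm, rfl⟩
      rcases Nat.lt_succ_iff_lt_or_eq.mp hm with h | rfl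
      · exact Or.inl ⟨m, h, rfl⟩
      · exact Or.inr rfl

lemma vsList_set (hE : ¬ FiniteDimensional ℝ E) (n : ℕ) :
    {x : E | x ∈ vsList hE n} = ySeq hE '' Set.Iio n := by
  ext x
  simp [mem_vsList, Set.mem_image, eq_comm]

lemma ySeq_spec (hE : ¬ FiniteDimensional ℝ E) (n : ℕ) :
    ‖ySeq hE n‖ = 1 ∧ ∀ f ∈ span ℝ (ySeq hE '' Set.Iio n), ∀ t : ℝ,
      (1 - (1/2:ℝ)^(n+2)) * ‖f‖ ≤ ‖f + t • ySeq hE n‖ := by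
  have := nextVec_spec hE (vsList hE n)
  rwa [vsList_set, vsList_length] at this

lemma one_sub_sum_le_prod_one_sub' (s : Finset ℕ) (f : ℕ → ℝ)
    (h0 : ∀ j ∈ s, 0 ≤ f j) (h1 : ∀ j ∈ s, f j ≤ 1) :
    1 - ∑ j ∈ s, f j ≤ ∏ j ∈ s, (1 - f j) := by
  classical
  induction s using Finset.induction with
  | empty => simp
  | insert a s ha ih =>
    rw [Finset.sum_insert ha, Finset.prod_insert ha]
    have hs0 : ∀ j ∈ s, 0 ≤ f j := fun j hj => h0 j (Finset.mem_insert_of_mem hj)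
    have hs1 : ∀ j ∈ s, f j ≤ 1 := fun j hj => h1 j (Finset.mem_insert_of_mem hj)
    have hih := ih hs0 hs1
    have hprod0 : (0:ℝ) ≤ ∏ j ∈ s, (1 - f j) :=
      Finset.prod_nonneg fun j hj => by linarith [hs1 j hj]
    have hsum0 : (0:ℝ) ≤ ∑ j ∈ s, f j := Finset.sum_nonneg hs0
    have ha0 := h0 a (Finset.mem_insert_self a s)
    have ha1 := h1 a (Finset.mem_insert_self a s)
    nlinarith

lemma prod_eps_ge (m N : ℕ) :
    (1/2 : ℝ) ≤ ∏ j ∈ Finset.Ico m N, (1 - (1/2:ℝ)^(j+2)) := by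
  have h1 : ∑ j ∈ Finset.Ico m N, ((1/2:ℝ))^(j+2) ≤ 1/2 := by
    calc ∑ j ∈ Finset.Ico m N, ((1/2:ℝ))^(j+2)
        ≤ ∑ j ∈ Finset.range N, ((1/2:ℝ))^(j+2) := by
          apply Finset.sum_le_sum_of_subset_of_nonneg
          · intro x hx
            simp only [Finset.mem_Ico] at hx
            exact Finset.mem_range.mpr hx.2
          · intro i _ _; positivity
      _ = (1/4) * ∑ j ∈ Finset.range N, ((1/2:ℝ))^j := by
          rw [Finset.mul_sum]
          apply Finset.sum_congr rfl
          intro i _; ring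
      _ ≤ (1/4) * 2 := by
          have := sum_geometric_two_le N
          linarith
      _ = 1/2 := by norm_num
  have h2 := one_sub_sum_le_prod_one_sub' (Finset.Ico m N) (fun j => (1/2:ℝ)^(j+2))
    (fun j _ => by positivity)
    (fun j _ => by
      have : ((1/2:ℝ))^(j+2) ≤ (1/2:ℝ)^0 := by
        apply pow_le_pow_of_le_one <;> norm_num
      simpa using this)
  linarith

lemma partial_sum_le (hE : ¬ FiniteDimensional ℝ E) (c : ℕ → ℝ) (m N : ℕ) (hmN : m ≤ N) :
    ‖∑ i ∈ Finset.range m, c i • ySeq hE i‖ * ∏ j ∈ Finset.Ico m N, (1 - (1/2:ℝ)^(j+2))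
      ≤ ‖∑ i ∈ Finset.range N, c i • ySeq hE i‖ := by
  induction N, hmN using Nat.le_induction with
  | base => simp
  | succ N hmN ih =>
    have hmem : (∑ i ∈ Finset.range N, c i • ySeq hE i) ∈
        span ℝ (ySeq hE '' Set.Iio N) := by
      apply Submodule.sum_mem
      intro i hi
      exact Submodule.smul_mem _ _ (subset_span ⟨i, Finset.mem_range.mp hi, rfl⟩)
    have hstep := (ySeq_spec hE N).2 _ hmem (c N)
    rw [Finset.prod_Ico_succ_top hmN, ← mul_assoc]
    have hεnn : (0:ℝ) ≤ 1 - (1/2:ℝ)^(N+2) := by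
      have : ((1/2:ℝ))^(N+2) ≤ (1/2:ℝ)^0 := by
        apply pow_le_pow_of_le_one <;> norm_num
      simpa using this
    calc ‖∑ i ∈ Finset.range m, c i • ySeq hE i‖ * (∏ j ∈ Finset.Ico m N, (1 - (1/2:ℝ)^(j+2)))
          * (1 - (1/2:ℝ)^(N+2))
        ≤ ‖∑ i ∈ Finset.range N, c i • ySeq hE i‖ * (1 - (1/2:ℝ)^(N+2)) :=
          mul_le_mul_of_nonneg_right ih hεnn
      _ = (1 - (1/2:ℝ)^(N+2)) * ‖∑ i ∈ Finset.range N, c i • ySeq hE i‖ := mul_comm _ _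
      _ ≤ ‖(∑ i ∈ Finset.range N, c i • ySeq hE i) + c N • ySeq hE N‖ := hstep
      _ = ‖∑ i ∈ Finset.range (N+1), c i • ySeq hE i‖ := by rw [Finset.sum_range_succ]

lemma partial_sum_le₂ (hE : ¬ FiniteDimensional ℝ E) (c : ℕ → ℝ) (m N : ℕ) (hmN : m ≤ N) :
    ‖∑ i ∈ Finset.range m, c i • ySeq hE i‖ ≤
      2 * ‖∑ i ∈ Finset.range N, c i • ySeq hE i‖ := by
  have h1 := partial_sum_le hE c m N hmN
  have h2 := prod_eps_ge m N
  have h3 : (0:ℝ) ≤ ‖∑ i ∈ Finset.range m, c i • ySeq hE i‖ := norm_nonneg _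
  nlinarith

lemma coord_bound (hE : ¬ FiniteDimensional ℝ E) (c : ℕ → ℝ) (N n : ℕ) (hn : n < N) :
    |c n| ≤ 4 * ‖∑ i ∈ Finset.range N, c i • ySeq hE i‖ := by
  have h1 := partial_sum_le₂ hE c (n+1) N hn
  have h2 := partial_sum_le₂ hE c n N (le_of_lt hn)
  have h3 : |c n| = ‖(∑ i ∈ Finset.range (n+1), c i • ySeq hE i)
      - ∑ i ∈ Finset.range n, c i • ySeq hE i‖ := by
    rw [Finset.sum_range_succ, add_sub_cancel_left, norm_smul, (ySeq_spec hE n).1,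
      mul_one, Real.norm_eq_abs]
  rw [h3]
  calc ‖_ - _‖ ≤ ‖∑ i ∈ Finset.range (n+1), c i • ySeq hE i‖
        + ‖∑ i ∈ Finset.range n, c i • ySeq hE i‖ := norm_sub_le _ _
    _ ≤ 4 * ‖∑ i ∈ Finset.range N, c i • ySeq hE i‖ := by linarith

lemma ySeq_li (hE : ¬ FiniteDimensional ℝ E) : LinearIndependent ℝ (ySeq hE) := by
  classical
  rw [linearIndependent_iff']
  intro s g hsum i hi
  set c : ℕ → ℝ := fun j => if j ∈ s then g j else 0 with hc
  set N : ℕ := (s.sup id) + 1 with hN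
  have hsub : s ⊆ Finset.range N := by
    intro j hj
    exact Finset.mem_range.mpr (Nat.lt_succ_of_le (Finset.le_sup (f := id) hj))
  have hsumeq : ∑ j ∈ Finset.range N, c j • ySeq hE j = 0 := by
    rw [← Finset.sum_subset hsub (fun x _ hxs => by simp [hc, hxs])]
    rw [← hsum]
    apply Finset.sum_congr rfl
    intro j hj; simp [hc, hj]
  have := coord_bound hE c N i (hsub hi |> Finset.mem_range.mp)
  rw [hsumeq] at this
  simp only [norm_zero, mul_zero] at this
  have : c i = 0 := abs_nonpos_iff.mp this
  simpa [hc, hi] using this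

lemma repr_bound (hE : ¬ FiniteDimensional ℝ E) (x : span ℝ (Set.range (ySeq hE))) (n : ℕ) :
    |(ySeq_li hE).repr x n| ≤ 4 * ‖(x : E)‖ := by
  classical
  set li := ySeq_li hE
  set c : ℕ → ℝ := fun j => li.repr x j with hc
  set s : Finset ℕ := (li.repr x).support with hs
  set N : ℕ := max ((s.sup id) + 1) (n + 1) with hN
  have hsub : s ⊆ Finset.range N := by
    intro j hj
    refine Finset.mem_range.mpr (lt_of_lt_of_le ?_ (le_max_left _ _))
    exact Nat.lt_succ_of_le (Finset.le_sup (f := id) hj)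
  have hxeq : ∑ j ∈ Finset.range N, c j • ySeq hE j = (x : E) := by
    rw [← Finset.sum_subset hsub (fun j _ hj => by
      simp only [hc]
      rw [Finsupp.notMem_support_iff.mp hj, zero_smul])]
    have := li.linearCombination_repr x
    rw [← this]
    rw [Finsupp.linearCombination_apply, Finsupp.sum]
  have hnN : n < N := lt_of_lt_of_le (Nat.lt_succ_self n) (le_max_right _ _)
  have := coord_bound hE c N n hnN
  rwa [hxeq] at this

lemma exists_biorthogonal (hE : ¬ FiniteDimensional ℝ E) :
    ∃ (y : ℕ → E) (g : ℕ → E →L[ℝ] ℝ), (∀ n, ‖y n‖ = 1) ∧ (∀ n, ‖g n‖ ≤ 4) ∧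
      (∀ n m, g n (y m) = if n = m then 1 else 0) := by
  classical
  set li := ySeq_li hE
  set p : Submodule ℝ E := span ℝ (Set.range (ySeq hE)) with hp
  have hb : ∀ n : ℕ, ∀ x : p, ‖(Finsupp.lapply n ∘ₗ li.repr) x‖ ≤ 4 * ‖x‖ := by
    intro n x
    simpa [Real.norm_eq_abs] using repr_bound hE x n
  set F : ℕ → (p →L[ℝ] ℝ) := fun n =>
    LinearMap.mkContinuous (Finsupp.lapply n ∘ₗ li.repr) 4 (hb n) with hF
  have hFnorm : ∀ n, ‖F n‖ ≤ 4 :=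
    fun n => LinearMap.mkContinuous_norm_le _ (by norm_num) _
  choose g hg1 hg2 using fun n => exists_extension_norm_eq p (F n)
  refine ⟨ySeq hE, g, fun n => (ySeq_spec hE n).1, fun n => (hg2 n) ▸ hFnorm n, ?_⟩
  intro n m
  have hmem : ySeq hE m ∈ p := subset_span ⟨m, rfl⟩
  have := hg1 n ⟨ySeq hE m, hmem⟩
  rw [this]
  have hrepr : li.repr ⟨ySeq hE m, hmem⟩ = Finsupp.single m 1 :=
    li.repr_eq_single m ⟨ySeq hE m, hmem⟩ rfl
  show (Finsupp.lapply n ∘ₗ li.repr) ⟨ySeq hE m, hmem⟩ = _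
  rw [LinearMap.comp_apply, hrepr]
  simp [Finsupp.single_apply, eq_comm]

end Aux

theorem renorming_with_equilateral_set {E : Type*}
    [NormedAddCommGroup E] [NormedSpace ℝ E] [CompleteSpace E]
    (hE : ¬ FiniteDimensional ℝ E) :
    ∃ (N : E → ℝ) (c C : ℝ), 0 < c ∧ 0 < C ∧
      (∀ x : E, c * ‖x‖ ≤ N x ∧ N x ≤ C * ‖x‖) ∧
      (∀ x y : E, N (x + y) ≤ N x + N y) ∧
      (∀ (r : ℝ) (x : E), N (r • x) = |r| * N x) ∧
      ∃ (A : Set E) (δ : ℝ), A.Infinite ∧ 0 < δ ∧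
        ∀ x ∈ A, ∀ y ∈ A, x ≠ y → N (x - y) = δ := by
  classical
  obtain ⟨y, g, hy, hg, hgy⟩ := exists_biorthogonal hE
  set N : E → ℝ := fun x => max ((1/2) * ‖x‖) (⨆ n, |g n x|) with hNdef
  have hbdd : ∀ x : E, BddAbove (Set.range fun n => |g n x|) := by
    intro x
    refine ⟨4 * ‖x‖, ?_⟩
    rintro a ⟨n, rfl⟩
    calc |g n x| ≤ ‖g n‖ * ‖x‖ := (g n).le_opNorm x
      _ ≤ 4 * ‖x‖ := mul_le_mul_of_nonneg_right (hg n) (norm_nonneg x)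
  have hsup_le : ∀ x : E, (⨆ n, |g n x|) ≤ 4 * ‖x‖ := by
    intro x
    refine Real.iSup_le (fun n => ?_) (by positivity)
    calc |g n x| ≤ ‖g n‖ * ‖x‖ := (g n).le_opNorm x
      _ ≤ 4 * ‖x‖ := mul_le_mul_of_nonneg_right (hg n) (norm_nonneg x)
  refine ⟨N, 1/2, 4, by norm_num, by norm_num, ?_, ?_, ?_, ?_⟩
  · intro x
    refine ⟨le_max_left _ _, max_le ?_ (hsup_le x)⟩
    nlinarith [norm_nonneg x]
  · intro x y'
    have h1 : (⨆ n, |g n (x + y')|) ≤ N x + N y' := by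
      refine Real.iSup_le (fun n => ?_) ?_
      · calc |g n (x + y')| = |g n x + g n y'| := by rw [map_add]
          _ ≤ |g n x| + |g n y'| := abs_add_le _ _
          _ ≤ N x + N y' := by
              gcongr
              · exact le_trans (le_ciSup (hbdd x) n) (le_max_right _ _)
              · exact le_trans (le_ciSup (hbdd y') n) (le_max_right _ _)
      · have : (0:ℝ) ≤ N x := le_trans (by positivity) (le_max_left _ _)
        have : (0:ℝ) ≤ N y' := le_trans (by positivity) (le_max_left _ _)
        linarith
    refine max_le ?_ h1
    calc (1/2) * ‖x + y'‖ ≤ (1/2) * ‖x‖ + (1/2) * ‖y'‖ := by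
          have := norm_add_le x y'; linarith
      _ ≤ N x + N y' := add_le_add (le_max_left _ _) (le_max_left _ _)
  · intro r x
    have h1 : (⨆ n, |g n (r • x)|) = |r| * ⨆ n, |g n x| := by
      rw [Real.mul_iSup_of_nonneg (abs_nonneg r)]
      congr 1; ext n
      rw [map_smul, smul_eq_mul, abs_mul]
    have h2 : (1/2) * ‖r • x‖ = |r| * ((1/2) * ‖x‖) := by
      rw [norm_smul, Real.norm_eq_abs]; ring
    rw [hNdef]
    simp only
    rw [h1, h2, mul_max_of_nonneg _ _ (abs_nonneg r)]
  · refine ⟨Set.range y, 1, ?_, one_pos, ?_⟩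
    · apply Set.infinite_range_of_injective
      intro j k hjk
      by_contra hne
      have h1 : g j (y j) = 1 := by rw [hgy]; simp
      have h2 : g j (y k) = 0 := by rw [hgy]; simp [hne]
      rw [hjk, h2] at h1
      norm_num at h1
    · rintro a ⟨j, rfl⟩ b ⟨k, rfl⟩ hne
      have hjk : j ≠ k := fun h => hne (by rw [h])
      have habs : ∀ n, |g n (y j - y k)| ≤ 1 := by
        intro n
        rw [map_sub, hgy, hgy]
        rcases eq_or_ne n j with rfl | h1 <;> rcases eq_or_ne n k with rfl | h2 <;>
          simp_all
      have hsup1 : (⨆ n, |g n (y j - y k)|) = 1 := by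
        refine le_antisymm (Real.iSup_le habs zero_le_one) ?_
        have : |g j (y j - y k)| = 1 := by
          rw [map_sub, hgy, hgy]
          simp [hjk]
        rw [← this]
        exact le_ciSup (hbdd _) j
      have hh : (1/2) * ‖y j - y k‖ ≤ 1 := by
        have := norm_sub_le (y j) (y k)
        rw [hy j, hy k] at this
        linarith
      rw [hNdef]
      simp only
      rw [hsup1, max_eq_right hh]
end

section
/- If X, Y, Z are Banach spaces with CR(X,Y) = ∞ and Y ⊕ Y embeds isomorphically into Y (and dim X, dim Y ≥ 2), then CR(X,Z) ≥ CR(Y,Z). -/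
open scoped ENNReal NNReal

section AuxLemmas

open scoped ENNReal NNReal

/-- From `r < κ/ω` extract `a < κ` and `ω < b` with `r ≤ a / b`. -/
lemma extract_ratio (κ ω : ℝ≥0∞) (r : ℝ≥0) (hr : 0 < r) (h : (r : ℝ≥0∞) < κ / ω) :
    ∃ a b : ℝ≥0, 0 < a ∧ 0 < b ∧ (a : ℝ≥0∞) < κ ∧ ω < (b : ℝ≥0∞) ∧ r ≤ a / b := by
  have hωtop : ω ≠ ⊤ := by
    rintro rfl
    simp [ENNReal.div_top] at h
  have hrω : (r : ℝ≥0∞) * ω < κ := by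
    rcases eq_or_ne ω 0 with h0 | h0
    · have hκ : κ ≠ 0 := by
        rintro rfl
        simp [h0] at h
      simpa [h0] using pos_iff_ne_zero.mpr hκ
    · exact (ENNReal.lt_div_iff_mul_lt (Or.inl h0) (Or.inl hωtop)).mp h
  obtain ⟨a, ha1, ha2⟩ := ENNReal.lt_iff_exists_nnreal_btwn.mp hrω
  have haa : 0 < a := by
    rw [pos_iff_ne_zero]
    rintro rfl
    simp at ha1
  refine ⟨a, a / r, haa, div_pos haa hr, ha2, ?_, ?_⟩
  · rw [ENNReal.coe_div hr.ne']
    exact (ENNReal.lt_div_iff_mul_lt (Or.inl (by exact_mod_cast hr.ne'))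
      (Or.inl ENNReal.coe_ne_top)).mpr (by rwa [mul_comm] at ha1)
  · rw [le_div_iff₀ (div_pos haa hr)]
    rw [mul_div_cancel₀ _ hr.ne']

lemma kappa_extract {X E : Type*} [NormedAddCommGroup X] [NormedAddCommGroup E]
    (φ : X → E) (a : ℝ≥0) (h : (a : ℝ≥0∞) < kappaCoef φ) :
    ∃ t : ℝ, 0 < t ∧ ∀ x y : X, t ≤ ‖x - y‖ → (a : ℝ) ≤ ‖φ x - φ y‖ := by
  rw [kappaCoef, lt_iSup_iff] at h
  obtain ⟨t, ht⟩ := h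
  rw [lt_iSup_iff] at ht
  obtain ⟨ht0, hmod⟩ := ht
  refine ⟨max t 1, lt_of_lt_of_le one_pos (le_max_right _ _), fun x y hxy => ?_⟩
  have h1 : (a : ℝ≥0∞) < (‖φ x - φ y‖₊ : ℝ≥0∞) :=
    lt_of_lt_of_le hmod (iInf₂_le_of_le x y (iInf_le _ (le_trans (le_max_left _ _) hxy)))
  have h2 : a < ‖φ x - φ y‖₊ := by exact_mod_cast h1
  calc (a : ℝ) ≤ (‖φ x - φ y‖₊ : ℝ) := by exact_mod_cast h2.le
    _ = ‖φ x - φ y‖ := coe_nnnorm _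

lemma omega_extract {X E : Type*} [NormedAddCommGroup X] [NormedAddCommGroup E]
    (φ : X → E) (b : ℝ≥0) (h : omegaCoef φ < (b : ℝ≥0∞)) :
    ∃ s : ℝ, 0 < s ∧ ∀ x y : X, ‖x - y‖ ≤ s → ‖φ x - φ y‖ ≤ (b : ℝ) := by
  rw [omegaCoef, iInf_lt_iff] at h
  obtain ⟨s, hs⟩ := h
  rw [iInf_lt_iff] at hs
  obtain ⟨hs0, hmod⟩ := hs
  refine ⟨s, hs0, fun x y hxy => ?_⟩
  have h1 : (‖φ x - φ y‖₊ : ℝ≥0∞) < (b : ℝ≥0∞) :=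
    lt_of_le_of_lt (le_iSup₂_of_le x y
      (le_iSup_of_le hxy (le_refl ((‖φ x - φ y‖₊ : ℝ≥0∞))))) hmod
  have h2 : ‖φ x - φ y‖₊ < b := by exact_mod_cast h1
  calc ‖φ x - φ y‖ = (‖φ x - φ y‖₊ : ℝ) := (coe_nnnorm _).symm
    _ ≤ (b : ℝ) := by exact_mod_cast h2.le

lemma kappa_ge {X E : Type*} [NormedAddCommGroup X] [NormedAddCommGroup E]
    (φ : X → E) (a : ℝ≥0) (t : ℝ) (ht : 0 ≤ t)
    (h : ∀ x y : X, t ≤ ‖x - y‖ → (a : ℝ) ≤ ‖φ x - φ y‖) :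
    (a : ℝ≥0∞) ≤ kappaCoef φ := by
  refine le_iSup₂_of_le t ht (le_iInf₂ fun x y => le_iInf fun hxy => ?_)
  rw [ENNReal.coe_le_coe, ← NNReal.coe_le_coe, coe_nnnorm]
  exact h x y hxy

lemma omega_le {X E : Type*} [NormedAddCommGroup X] [NormedAddCommGroup E]
    (φ : X → E) (b : ℝ≥0) (s : ℝ) (hs : 0 < s)
    (h : ∀ x y : X, ‖x - y‖ ≤ s → ‖φ x - φ y‖ ≤ (b : ℝ)) :
    omegaCoef φ ≤ (b : ℝ≥0∞) := by
  refine iInf₂_le_of_le s hs (iSup₂_le fun x y => iSup_le fun hxy => ?_)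
  rw [ENNReal.coe_le_coe, ← NNReal.coe_le_coe, coe_nnnorm]
  exact h x y hxy

lemma key_lemma {X Y Z : Type*} [NormedAddCommGroup X] [NormedSpace ℝ X]
    [NormedAddCommGroup Y] [NormedSpace ℝ Y] [NormedAddCommGroup Z]
    (hXY : (⨆ φ : X → Y, sepRatio φ) = ⊤) (ψ : Y → Z)
    (a b : ℝ≥0) (ha : 0 < a) (hb : 0 < b)
    (haκ : (a : ℝ≥0∞) < kappaCoef ψ) (hbω : omegaCoef ψ < (b : ℝ≥0∞)) :
    (a : ℝ≥0∞) / b ≤ ⨆ φ : X → Z, sepRatio φ := by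
  obtain ⟨t₀, ht₀, hψfar⟩ := kappa_extract ψ a haκ
  obtain ⟨s₀, hs₀, hψnear⟩ := omega_extract ψ b hbω
  set c : ℝ≥0 := ⟨t₀ / s₀, by positivity⟩ with hc
  have hc0 : 0 < c := by
    rw [← NNReal.coe_lt_coe, NNReal.coe_zero]
    exact div_pos ht₀ hs₀
  have hcval : (c : ℝ) = t₀ / s₀ := rfl
  have htop : (c : ℝ≥0∞) < ⨆ φ : X → Y, sepRatio φ := by
    rw [hXY]; exact ENNReal.coe_lt_top
  rw [lt_iSup_iff] at htop
  obtain ⟨φ, hφ⟩ := htop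
  rw [sepRatio] at hφ
  obtain ⟨K, B, hK, hB, hKκ, hBω, hcKB⟩ := extract_ratio _ _ c hc0 hφ
  obtain ⟨t₁, ht₁, hfar⟩ := kappa_extract φ K hKκ
  obtain ⟨δ, hδ, hnear⟩ := omega_extract φ B hBω
  have hKr : (0 : ℝ) < (K : ℝ) := by exact_mod_cast hK
  have hBr : (0 : ℝ) < (B : ℝ) := by exact_mod_cast hB
  set lam : ℝ := t₀ / (K : ℝ) with hlam
  have hlam0 : 0 < lam := div_pos ht₀ hKr
  set χ : X → Y := fun x => lam • φ x with hχ
  have hnormχ : ∀ x y : X, ‖χ x - χ y‖ = lam * ‖φ x - φ y‖ := by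
    intro x y
    rw [hχ]
    simp only [← smul_sub, norm_smul, Real.norm_eq_abs, abs_of_pos hlam0]
  have hcb : t₀ / s₀ ≤ (K : ℝ) / (B : ℝ) := by
    rw [← hcval, ← NNReal.coe_div]
    exact_mod_cast hcKB
  have hcb2 : t₀ * (B : ℝ) ≤ (K : ℝ) * s₀ := by
    rw [div_le_div_iff₀ hs₀ hBr] at hcb
    linarith
  have hfarχ : ∀ x y : X, t₁ ≤ ‖x - y‖ → (a : ℝ) ≤ ‖ψ (χ x) - ψ (χ y)‖ := by
    intro x y hxy
    apply hψfar
    rw [hnormχ]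
    have h1 : (K : ℝ) ≤ ‖φ x - φ y‖ := hfar x y hxy
    calc t₀ = lam * (K : ℝ) := by rw [hlam]; field_simp
      _ ≤ lam * ‖φ x - φ y‖ := by nlinarith
  have hnearχ : ∀ x y : X, ‖x - y‖ ≤ δ → ‖ψ (χ x) - ψ (χ y)‖ ≤ (b : ℝ) := by
    intro x y hxy
    apply hψnear
    rw [hnormχ]
    have h1 : ‖φ x - φ y‖ ≤ (B : ℝ) := hnear x y hxy
    have h2 : lam * ‖φ x - φ y‖ ≤ lam * (B : ℝ) :=
      mul_le_mul_of_nonneg_left h1 hlam0.le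
    have h3 : lam * (B : ℝ) ≤ s₀ := by
      rw [hlam, div_mul_eq_mul_div, div_le_iff₀ hKr]
      linarith
    linarith
  have hκΦ : (a : ℝ≥0∞) ≤ kappaCoef (fun x => ψ (χ x)) :=
    kappa_ge _ a t₁ ht₁.le hfarχ
  have hωΦ : omegaCoef (fun x => ψ (χ x)) ≤ (b : ℝ≥0∞) :=
    omega_le _ b δ hδ hnearχ
  calc (a : ℝ≥0∞) / b ≤ sepRatio (fun x => ψ (χ x)) := ENNReal.div_le_div hκΦ hωΦ
    _ ≤ ⨆ φ : X → Z, sepRatio φ := le_iSup (fun φ : X → Z => sepRatio φ) _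

end AuxLemmas

theorem coarse_ratio_transitive {X Y Z : Type*}
    [NormedAddCommGroup X] [NormedSpace ℝ X] [CompleteSpace X]
    [NormedAddCommGroup Y] [NormedSpace ℝ Y] [CompleteSpace Y]
    [NormedAddCommGroup Z] [NormedSpace ℝ Z] [CompleteSpace Z]
    (hX : 2 ≤ Module.rank ℝ X) (hY : 2 ≤ Module.rank ℝ Y)
    (hXY : (⨆ φ : X → Y, sepRatio φ) = ⊤)
    (hYY : ∃ (J : (Y × Y) →L[ℝ] Y) (c : ℝ), 0 < c ∧ ∀ v : Y × Y, c * ‖v‖ ≤ ‖J v‖) :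
    (⨆ φ : Y → Z, sepRatio φ) ≤ ⨆ φ : X → Z, sepRatio φ := by
  refine iSup_le fun ψ => ?_
  refine ENNReal.le_of_forall_nnreal_lt fun r hr => ?_
  rcases eq_or_ne r 0 with rfl | hr0
  · simp
  have hr0' : 0 < r := pos_iff_ne_zero.mpr hr0
  rw [sepRatio] at hr
  obtain ⟨a, b, ha, hb, haκ, hbω, hrab⟩ := extract_ratio _ _ r hr0' hr
  calc (r : ℝ≥0∞) ≤ (a : ℝ≥0∞) / (b : ℝ≥0∞) := by
        rw [← ENNReal.coe_div hb.ne']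
        exact_mod_cast hrab
    _ ≤ ⨆ φ : X → Z, sepRatio φ := key_lemma hXY ψ a b ha hb haκ hbω
end

section
/- Let ψ_n : X → E be maps with ψ_n(0) = 0 such that ‖x−y‖ ≤ n implies ‖ψ_n(x)−ψ_n(y)‖ ≤ 2^{−n} for all n ≥ 1. Then the map ψ(x) = Σ_{n=1}^∞ ψ_n(x) is well-defined (the series converges absolutely) and for every natural number m ≥ 1 and all x, y ∈ X with ‖x−y‖ ≤ m one has ‖ψ(x)−ψ(y)‖ < m + 2^{−m+1}; in particular ψ is Lipschitz for large distances. -/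
open scoped ENNReal NNReal

lemma chain_bound' {X E : Type*} [NormedAddCommGroup X] [NormedSpace ℝ X]
    [NormedAddCommGroup E]
    (f : X → E) (n : ℕ) (hn : 1 ≤ n)
    (hf : ∀ x y : X, ‖x - y‖ ≤ (n : ℝ) → ‖f x - f y‖ ≤ (1 / 2 : ℝ) ^ n)
    (m : ℕ) (hm : 1 ≤ m) (x y : X) (hxy : ‖x - y‖ ≤ (m : ℝ)) :
    ‖f x - f y‖ ≤ (m : ℝ) * (1 / 2) ^ n := by
  have hm0 : (0 : ℝ) < m := by exact_mod_cast hm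
  set g : ℕ → E := fun i => f (x + ((i : ℝ) / m) • (y - x)) with hg
  have hg0 : g 0 = f x := by simp [hg]
  have hgm : g m = f y := by
    have h1 : ((m : ℝ) / m) = 1 := div_self hm0.ne'
    simp [hg, h1]
  have key : f x - f y = -(∑ i ∈ Finset.range m, (g (i + 1) - g i)) := by
    rw [Finset.sum_range_sub g, hg0, hgm]; abel
  rw [key, norm_neg]
  calc ‖∑ i ∈ Finset.range m, (g (i + 1) - g i)‖
      ≤ ∑ i ∈ Finset.range m, ‖g (i + 1) - g i‖ := norm_sum_le _ _
    _ ≤ ∑ _i ∈ Finset.range m, (1 / 2 : ℝ) ^ n := by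
        refine Finset.sum_le_sum fun i _ => ?_
        apply hf
        have hdiff : (x + (((i + 1 : ℕ) : ℝ) / (m : ℝ)) • (y - x)) - (x + ((i : ℝ) / m) • (y - x))
            = ((1 : ℝ) / m) • (y - x) := by
          rw [add_sub_add_left_eq_sub, ← sub_smul]
          congr 1
          push_cast
          field_simp
          ring
        rw [hdiff, norm_smul]
        have : ‖(1 : ℝ) / m‖ * ‖y - x‖ ≤ 1 := by
          rw [Real.norm_eq_abs, abs_of_pos (by positivity)]
          rw [div_mul_eq_mul_div, one_mul, div_le_one hm0, norm_sub_rev]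
          exact hxy
        calc ‖(1 : ℝ) / m‖ * ‖y - x‖ ≤ 1 := this
          _ ≤ (n : ℝ) := by exact_mod_cast hn
    _ = (m : ℝ) * (1 / 2) ^ n := by
        rw [Finset.sum_const, Finset.card_range, nsmul_eq_mul]

theorem sum_map_lipschitz_large {X E : Type*}
    [NormedAddCommGroup X] [NormedSpace ℝ X] [CompleteSpace X]
    [NormedAddCommGroup E] [NormedSpace ℝ E] [CompleteSpace E]
    (hX : 2 ≤ Module.rank ℝ X)
    (ψ : ℕ → X → E) (hψ0 : ∀ n, ψ n 0 = 0)
    (hlip : ∀ n : ℕ, 1 ≤ n → ∀ x y : X, ‖x - y‖ ≤ (n : ℝ) →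
      ‖ψ n x - ψ n y‖ ≤ (1 / 2 : ℝ) ^ n) :
    (∀ x : X, Summable fun n : ℕ => ‖ψ (n + 1) x‖) ∧
    (∀ m : ℕ, 1 ≤ m → ∀ x y : X, ‖x - y‖ ≤ (m : ℝ) →
      ‖(∑' n : ℕ, ψ (n + 1) x) - ∑' n : ℕ, ψ (n + 1) y‖ < (m : ℝ) + 2 * (1 / 2 : ℝ) ^ m) ∧
    LipschitzLarge (fun x : X => ∑' n : ℕ, ψ (n + 1) x) := by
  -- chain bound for each ψ (n+1)
  have hchain : ∀ (m : ℕ), 1 ≤ m → ∀ (n : ℕ) (x y : X), ‖x - y‖ ≤ (m : ℝ) →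
      ‖ψ (n + 1) x - ψ (n + 1) y‖ ≤ (m : ℝ) * (1 / 2) ^ (n + 1) := by
    intro m hm n x y hxy
    exact chain_bound' (ψ (n + 1)) (n + 1) (Nat.le_add_left 1 n)
      (fun a b hab => hlip (n + 1) (Nat.le_add_left 1 n) a b hab) m hm x y hxy
  have hgeo : Summable fun n : ℕ => (1 / 2 : ℝ) ^ n :=
    summable_geometric_of_lt_one (by norm_num) (by norm_num)
  have hgeo1 : Summable fun n : ℕ => (1 / 2 : ℝ) ^ (n + 1) := by
    simpa [pow_succ, mul_comm] using hgeo.mul_left (1 / 2 : ℝ)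
  -- summability of norms
  have hsum : ∀ x : X, Summable fun n : ℕ => ‖ψ (n + 1) x‖ := by
    intro x
    obtain ⟨m, hm, hx⟩ : ∃ m : ℕ, 1 ≤ m ∧ ‖x‖ ≤ (m : ℝ) := by
      refine ⟨⌈‖x‖⌉₊ ⊔ 1, le_max_right _ _, ?_⟩
      calc ‖x‖ ≤ (⌈‖x‖⌉₊ : ℝ) := Nat.le_ceil _
        _ ≤ ((⌈‖x‖⌉₊ ⊔ 1 : ℕ) : ℝ) := by exact_mod_cast le_max_left _ _
    refine Summable.of_nonneg_of_le (fun n => norm_nonneg _) (fun n => ?_)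
      (hgeo1.mul_left (m : ℝ))
    have := hchain m hm n x 0 (by simpa using hx)
    simpa [hψ0] using this
  have hest : ∀ m : ℕ, 1 ≤ m → ∀ x y : X, ‖x - y‖ ≤ (m : ℝ) →
      ‖(∑' n : ℕ, ψ (n + 1) x) - ∑' n : ℕ, ψ (n + 1) y‖ < (m : ℝ) + 2 * (1 / 2 : ℝ) ^ m := by
    intro m hm x y hxy
    have hm0 : (0 : ℝ) < m := by exact_mod_cast hm
    set f : ℕ → E := fun n => ψ (n + 1) x - ψ (n + 1) y with hf
    have hfn : Summable fun n => ‖f n‖ := by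
      refine Summable.of_nonneg_of_le (fun n => norm_nonneg _) (fun n => ?_)
        (hgeo1.mul_left (m : ℝ))
      exact hchain m hm n x y hxy
    have hfs : Summable f := hfn.of_norm
    have hdiff : (∑' n : ℕ, ψ (n + 1) x) - (∑' n : ℕ, ψ (n + 1) y) = ∑' n, f n := by
      rw [← Summable.tsum_sub (hsum x).of_norm (hsum y).of_norm]
    rw [hdiff]
    have h1 : ‖∑' n, f n‖ ≤ ∑' n, ‖f n‖ := norm_tsum_le_tsum_norm hfn
    -- split the tsum at m
    have hsplit : (∑ i ∈ Finset.range m, ‖f i‖) + ∑' n, ‖f (n + m)‖ = ∑' n, ‖f n‖ :=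
      Summable.sum_add_tsum_nat_add m hfn
    have hhead : (∑ i ∈ Finset.range m, ‖f i‖) ≤ (m : ℝ) := by
      calc (∑ i ∈ Finset.range m, ‖f i‖)
          ≤ ∑ i ∈ Finset.range m, (m : ℝ) * (1 / 2) ^ (i + 1) :=
            Finset.sum_le_sum fun i _ => hchain m hm i x y hxy
        _ = (m : ℝ) * ∑ i ∈ Finset.range m, (1 / 2 : ℝ) ^ (i + 1) := by
            rw [Finset.mul_sum]
        _ ≤ (m : ℝ) * 1 := by
            refine mul_le_mul_of_nonneg_left ?_ hm0.le
            have := Summable.sum_le_tsum (Finset.range m) (fun i _ => by positivity) hgeo1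
            have htv : ∑' n : ℕ, (1 / 2 : ℝ) ^ (n + 1) = 1 := by
              have := tsum_geometric_of_lt_one (r := (1 / 2 : ℝ)) (by norm_num) (by norm_num)
              calc ∑' n : ℕ, (1 / 2 : ℝ) ^ (n + 1)
                  = ∑' n : ℕ, (1 / 2 : ℝ) * (1 / 2) ^ n := by
                    congr 1; funext n; ring
                _ = (1 / 2 : ℝ) * ∑' n : ℕ, (1 / 2 : ℝ) ^ n := tsum_mul_left
                _ = 1 := by rw [this]; norm_num
            linarith [this, htv.le]
        _ = (m : ℝ) := mul_one _
    have htail : (∑' n : ℕ, ‖f (n + m)‖) ≤ (1 / 2 : ℝ) ^ m := by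
      have hb : ∀ n : ℕ, ‖f (n + m)‖ ≤ (1 / 2 : ℝ) ^ (n + m + 1) := by
        intro n
        refine hlip (n + m + 1) (by omega) x y (hxy.trans ?_)
        exact_mod_cast (by omega : m ≤ n + m + 1)
      have hsb : Summable fun n : ℕ => (1 / 2 : ℝ) ^ (n + m + 1) := by
        have : (fun n : ℕ => (1 / 2 : ℝ) ^ (n + m + 1))
            = fun n : ℕ => (1 / 2 : ℝ) ^ (m + 1) * (1 / 2) ^ n := by
          funext n; rw [← pow_add]; ring_nf
        rw [this]; exact hgeo.mul_left _
      calc (∑' n : ℕ, ‖f (n + m)‖) ≤ ∑' n : ℕ, (1 / 2 : ℝ) ^ (n + m + 1) :=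
            Summable.tsum_le_tsum hb (hfn.comp_injective (add_left_injective m)) hsb
        _ = (1 / 2 : ℝ) ^ (m + 1) * ∑' n : ℕ, (1 / 2 : ℝ) ^ n := by
            rw [← tsum_mul_left]; congr 1; funext n; rw [← pow_add]; ring_nf
        _ = (1 / 2 : ℝ) ^ m := by
            rw [tsum_geometric_of_lt_one (by norm_num) (by norm_num)]
            rw [pow_succ]; ring
    have hpos : (0 : ℝ) < (1 / 2 : ℝ) ^ m := by positivity
    calc ‖∑' n, f n‖ ≤ ∑' n, ‖f n‖ := h1
      _ = (∑ i ∈ Finset.range m, ‖f i‖) + ∑' n, ‖f (n + m)‖ := hsplit.symm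
      _ ≤ (m : ℝ) + (1 / 2 : ℝ) ^ m := add_le_add hhead htail
      _ < (m : ℝ) + 2 * (1 / 2 : ℝ) ^ m := by linarith
  refine ⟨hsum, hest, ⟨3, fun x y => ?_⟩⟩
  set a := ‖x - y‖ with ha
  have ha0 : 0 ≤ a := norm_nonneg _
  set m : ℕ := ⌈a⌉₊ ⊔ 1 with hmdef
  have hm : 1 ≤ m := le_max_right _ _
  have hxy : a ≤ (m : ℝ) := by
    calc a ≤ (⌈a⌉₊ : ℝ) := Nat.le_ceil _
      _ ≤ (m : ℝ) := by exact_mod_cast le_max_left _ _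
  have hmle : (m : ℝ) ≤ a + 2 := by
    have h1 : m ≤ ⌈a⌉₊ + 1 := by omega
    have h2 : (⌈a⌉₊ : ℝ) < a + 1 := Nat.ceil_lt_add_one ha0
    have : (m : ℝ) ≤ (⌈a⌉₊ : ℝ) + 1 := by exact_mod_cast h1
    linarith
  have hsmall : 2 * (1 / 2 : ℝ) ^ m ≤ 1 := by
    have : (1 / 2 : ℝ) ^ m ≤ (1 / 2 : ℝ) ^ 1 :=
      pow_le_pow_of_le_one (by norm_num) (by norm_num) hm
    norm_num at this ⊢; linarith
  have := hest m hm x y hxy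
  simp only at this ⊢
  linarith
end
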